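/- arXiv:math/0412450 — 5 statements merged into one kernel-verified Lean document; each statement's English description precedes it below -/
import Mathlib

section
/- For every δ > 0, every a > 0, and every integer b ≥ 2, there exist p₀ < 1 and β₀ < ∞ such that for all p ∈ [p₀,1), all β ≥ β₀, all h ≥ −(b−1) + a, and every integer ℓ ≥ 1: P(R^ℓ(ω) > e^{−2β}) ≤ δ, where the environment ω is random with ω_r = +1 fixed and {ω_x}_{x ≠ r} i.i.d. with P(ω_x = +1) = p. -/
open scoped BigOperators ENNReal
open MeasureTheory

namespace Paper

/-- Vertices of the rooted `b`-ary tree: finite words over an alphabet of size `b`. -/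
abbrev V (b : ℕ) : Type := List (Fin b)

/-- The finset of vertices at depth exactly `n`. -/
def wordsOfLen (b : ℕ) : ℕ → Finset (V b)
  | 0 => {([] : V b)}
  | n + 1 => (wordsOfLen b n).biUnion fun x => Finset.univ.image fun k : Fin b => x ++ [k]

/-- The finset `T_ℓ` of vertices at depth at most `ℓ`. -/
def ball (b ℓ : ℕ) : Finset (V b) := (Finset.range (ℓ + 1)).biUnion (wordsOfLen b)

/-- `x` belongs to `T(ω)`, the connected component of the root inside the set of free
vertices (`ω = true` means free): every vertex on the path from the root to `x` is free. -/
def inT (b : ℕ) (ω : V b → Bool) (x : V b) : Bool :=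
  (List.range (x.length + 1)).all fun k => ω (x.take k)

/-- Neighbours of a vertex: its `b` children and (if it is not the root) its parent. -/
def nbrs (b : ℕ) (x : V b) : Finset (V b) :=
  (Finset.univ.image fun k : Fin b => x ++ [k]) ∪
    (if x = ([] : V b) then ∅ else {x.dropLast})

/-- The (outer) boundary `∂A` of a set of vertices. -/
def bdry (b : ℕ) (A : Finset (V b)) : Finset (V b) := (A.biUnion (nbrs b)) \ A

/-- Spin value of a Boolean: `true ↦ +1`, `false ↦ -1`. -/
noncomputable def spin (s : Bool) : ℝ := if s then 1 else -1

/-- Ising energy (with a `+` sign, i.e. `β(Σ_{xy ∈ E(A∪∂A)} σ_x σ_y + h Σ_{x∈A} σ_x)`)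
of the configuration `c` in the region `A`; the edges of `A ∪ ∂A` are enumerated as pairs
(parent y, y) with both endpoints in `A ∪ ∂A`; the edge from `cut` to its parent is removed
(taking `cut = []` removes nothing). -/
noncomputable def energy (b : ℕ) (β h : ℝ) (A : Finset (V b)) (cut : V b)
    (c : V b → Bool) : ℝ :=
  β * ((∑ y ∈ (A ∪ bdry b A).filter
        (fun y => y ≠ ([] : V b) ∧ y ≠ cut ∧ y.dropLast ∈ A ∪ bdry b A),
          spin (c y.dropLast) * spin (c y))
      + h * ∑ x ∈ A, spin (c x))

/-- Configuration on all of `𝕋^b` equal to `σ` on `A` and to the boundary condition `ω`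
off `A`. -/
def glue (b : ℕ) (A : Finset (V b)) (ω : V b → Bool) (σ : {x // x ∈ A} → Bool) :
    V b → Bool :=
  fun x => if hx : x ∈ A then σ ⟨x, hx⟩ else ω x

/-- Expectation of the observable `g` under the Ising Gibbs measure on `A` with parameters
`(β, h)`, boundary condition `ω`, and the edge from `cut` to its parent removed. -/
noncomputable def gibbsExp (b : ℕ) (β h : ℝ) (A : Finset (V b)) (cut : V b)
    (ω : V b → Bool) (g : (V b → Bool) → ℝ) : ℝ :=
  (∑ σ : {x // x ∈ A} → Bool,
      Real.exp (energy b β h A cut (glue b A ω σ)) * g (glue b A ω σ)) /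
  (∑ σ : {x // x ∈ A} → Bool, Real.exp (energy b β h A cut (glue b A ω σ)))

/-- The region `T_ℓ ∩ T(ω)`. -/
def region (b ℓ : ℕ) (ω : V b → Bool) : Finset (V b) :=
  (ball b ℓ).filter fun x => inT b ω x = true

/-- The ratio `R^ℓ(ω) = μ⁺_{ℓ,ω}(σ_r = -1) / μ⁺_{ℓ,ω}(σ_r = +1)`, with value `⊤`
when the root is an obstacle. -/
noncomputable def RfinE (b : ℕ) (β h : ℝ) (ℓ : ℕ) (ω : V b → Bool) : ℝ≥0∞ :=
  if ω ([] : V b) = true then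
    ENNReal.ofReal
      ((gibbsExp b β h (region b ℓ ω) [] ω fun c => if c ([] : V b) = false then 1 else 0) /
       (gibbsExp b β h (region b ℓ ω) [] ω fun c => if c ([] : V b) = true then 1 else 0))
  else ⊤

/-- `P` is the law of i.i.d. Bernoulli(`p`) spins (`+1`, i.e. `true`, with probability `p`)
on the vertices of `𝕋^b`. -/
def IsBernoulliProduct (b : ℕ) (p : ℝ) (P : Measure (V b → Bool)) : Prop :=
  IsProbabilityMeasure P ∧
    ∀ (F : Finset (V b)) (g : V b → Bool),
      P {ω | ∀ x ∈ F, ω x = g x} =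
        ∏ x ∈ F, ENNReal.ofReal (if g x then p else 1 - p)

/-- `P` is the law of the random environment whose root spin is `+1` (free) almost surely
and whose other spins are i.i.d. Bernoulli(`p`). -/
def IsBernoulliProductRoot (b : ℕ) (p : ℝ) (P : Measure (V b → Bool)) : Prop :=
  IsProbabilityMeasure P ∧
    ∀ (F : Finset (V b)) (g : V b → Bool), ([] : V b) ∉ F →
      P {ω | ω ([] : V b) = true ∧ ∀ x ∈ F, ω x = g x} =
        ∏ x ∈ F, ENNReal.ofReal (if g x then p else 1 - p)


/-! ### Basic combinatorics on words -/

lemma mem_wordsOfLen {b : ℕ} {x : V b} {n : ℕ} : x ∈ wordsOfLen b n ↔ x.length = n := by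
  induction n generalizing x with
  | zero =>
    simp [wordsOfLen, List.length_eq_zero_iff]
  | succ n ih =>
    constructor
    · intro hx
      simp only [wordsOfLen, Finset.mem_biUnion, Finset.mem_image, Finset.mem_univ,
        true_and] at hx
      obtain ⟨w, hw, k, rfl⟩ := hx
      simp [ih.1 hw]
    · intro hx
      have hne : x ≠ [] := by
        intro h; rw [h] at hx; simp at hx
      simp only [wordsOfLen, Finset.mem_biUnion, Finset.mem_image, Finset.mem_univ, true_and]
      refine ⟨x.dropLast, ih.2 ?_, x.getLast hne, ?_⟩
      · rw [List.length_dropLast, hx]; rfl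
      · exact List.dropLast_append_getLast hne
    
lemma mem_ball {b : ℕ} {x : V b} {ℓ : ℕ} : x ∈ ball b ℓ ↔ x.length ≤ ℓ := by
  simp only [ball, Finset.mem_biUnion, Finset.mem_range, mem_wordsOfLen]
  constructor
  · rintro ⟨i, hi, rfl⟩; omega
  · intro h; exact ⟨x.length, by omega, rfl⟩

lemma take_dropLast {b : ℕ} (x : V b) {j : ℕ} (hj : j ≤ x.length - 1) :
    x.dropLast.take j = x.take j := by
  rw [List.dropLast_eq_take, List.take_take]
  congr 1
  omega

/-- `C` is a subtree containing the root. -/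
def IsSub {b : ℕ} (C : Finset (V b)) : Prop :=
  ([] : V b) ∈ C ∧ ∀ x ∈ C, x ≠ ([] : V b) → x.dropLast ∈ C

instance {b : ℕ} (C : Finset (V b)) : Decidable (IsSub C) := by
  unfold IsSub; infer_instance

/-- Subtrees (containing the root) of a finite set of vertices. -/
def subtreesOf {b : ℕ} (A : Finset (V b)) : Finset (Finset (V b)) :=
  A.powerset.filter IsSub

lemma mem_subtreesOf {b : ℕ} {A C : Finset (V b)} :
    C ∈ subtreesOf A ↔ C ⊆ A ∧ IsSub C := by
  simp [subtreesOf, Finset.mem_filter, Finset.mem_powerset]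

lemma subtreesOf_mono {b : ℕ} {A B : Finset (V b)} (h : A ⊆ B) :
    subtreesOf A ⊆ subtreesOf B := by
  intro C hC
  rw [mem_subtreesOf] at hC ⊢
  exact ⟨hC.1.trans h, hC.2⟩

lemma take_mem_of_closed {b : ℕ} {C : Finset (V b)}
    (hC : ∀ x ∈ C, x ≠ ([] : V b) → x.dropLast ∈ C) {x : V b} (hx : x ∈ C) (j : ℕ) :
    x.take j ∈ C := by
  induction x using List.reverseRecOn generalizing j with
  | nil => simpa using hx
  | append_singleton y a ih =>
    by_cases hj : j ≤ y.length
    · have hy : y ∈ C := by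
        have := hC _ hx (by simp)
        simpa [List.dropLast_concat] using this
      rw [List.take_append_of_le_length hj]
      exact ih hy j
    · rw [List.take_of_length_le]
      · exact hx
      · simp; omega

/-! ### Children and outer child-boundary of a subtree -/

/-- The `b` children of a vertex. -/
def children {b : ℕ} (x : V b) : Finset (V b) :=
  Finset.univ.image fun k : Fin b => x ++ [k]

lemma mem_children {b : ℕ} {x y : V b} : y ∈ children x ↔ ∃ k : Fin b, y = x ++ [k] := by
  simp [children, eq_comm]

lemma card_children {b : ℕ} (x : V b) : (children x).card = b := by
  rw [children, Finset.card_image_of_injective _ (fun k k' hkk' => by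
    simpa using List.append_inj_right hkk' rfl)]
  simp

/-- Children of vertices of `C` that are not themselves in `C`. -/
def Dout {b : ℕ} (C : Finset (V b)) : Finset (V b) :=
  (C.biUnion children) \ C

lemma card_biUnion_children {b : ℕ} (C : Finset (V b)) :
    (C.biUnion children).card = b * C.card := by
  rw [Finset.card_biUnion, Finset.sum_congr rfl fun x _ => card_children x]
  · simp [mul_comm]
  · intro x hx y hy hxy
    simp only [Finset.disjoint_left, mem_children]
    rintro z ⟨k, rfl⟩ ⟨k', hk'⟩
    exact hxy (List.append_inj' hk' rfl).1

lemma biUnion_children_inter {b : ℕ} {C : Finset (V b)} (hC : IsSub C) :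
    (C.biUnion children) ∩ C = C.erase ([] : V b) := by
  ext y
  simp only [Finset.mem_inter, Finset.mem_biUnion, Finset.mem_erase, mem_children]
  constructor
  · rintro ⟨⟨x, hx, k, rfl⟩, hyC⟩
    exact ⟨by simp, hyC⟩
  · rintro ⟨hne, hyC⟩
    refine ⟨⟨y.dropLast, hC.2 _ hyC hne, y.getLast hne, (List.dropLast_append_getLast hne).symm⟩, hyC⟩

lemma card_Dout {b : ℕ} {C : Finset (V b)} (hC : IsSub C) :
    (Dout C).card + (C.card - 1) = b * C.card := by
  have h1 := Finset.card_sdiff_add_card_inter (C.biUnion children) C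
  rw [biUnion_children_inter hC, Finset.card_erase_of_mem hC.1] at h1
  rw [← card_biUnion_children C]
  exact h1

lemma card_Dout_real {b : ℕ} {C : Finset (V b)} (hC : IsSub C) :
    ((Dout C).card : ℝ) = b * C.card - C.card + 1 := by
  have h1 := card_Dout hC
  have hpos : 1 ≤ C.card := Finset.card_pos.2 ⟨_, hC.1⟩
  have : ((Dout C).card + (C.card - 1) : ℕ) = (b * C.card : ℕ) := h1
  have := congrArg (fun n : ℕ => (n : ℝ)) this
  push_cast [Nat.cast_sub hpos] at this
  linarith

/-! ### The region is a subtree with free vertices -/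

lemma region_subset_ball {b ℓ : ℕ} (ω : V b → Bool) : region b ℓ ω ⊆ ball b ℓ :=
  Finset.filter_subset _ _

lemma inT_iff {b : ℕ} {ω : V b → Bool} {x : V b} :
    inT b ω x = true ↔ ∀ k, k ≤ x.length → ω (x.take k) = true := by
  simp only [inT, List.all_eq_true, List.mem_range]
  constructor
  · intro h k hk; exact h k (by omega)
  · intro h k hk; exact h k (by omega)

lemma region_free {b ℓ : ℕ} {ω : V b → Bool} {x : V b} (hx : x ∈ region b ℓ ω) :
    ω x = true := by
  rw [region, Finset.mem_filter] at hx
  have := (inT_iff.1 hx.2) x.length le_rfl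
  simpa using this

lemma root_mem_region {b ℓ : ℕ} {ω : V b → Bool} (hω : ω ([] : V b) = true) :
    ([] : V b) ∈ region b ℓ ω := by
  rw [region, Finset.mem_filter]
  refine ⟨mem_ball.2 (by simp), inT_iff.2 ?_⟩
  intro k hk
  simp only [List.length_nil, Nat.le_zero] at hk
  simpa [hk] using hω

lemma region_closed {b ℓ : ℕ} (ω : V b → Bool) :
    ∀ x ∈ region b ℓ ω, x ≠ ([] : V b) → x.dropLast ∈ region b ℓ ω := by
  intro x hx hne
  rw [region, Finset.mem_filter] at hx ⊢
  have hlen : x.dropLast.length = x.length - 1 := by simp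
  constructor
  · rw [mem_ball] at hx ⊢
    omega
  · rw [inT_iff] at hx ⊢
    intro k hk
    rw [take_dropLast x (by omega)]
    exact hx.2 k (by omega)

/-! ### Generating function bound for subtrees of the ball -/

/-- The `k`-th branch of a subtree. -/
def branch {b : ℕ} (k : Fin b) (C : Finset (V b)) : Finset (V b) :=
  (C.filter (fun x => x.head? = some k)).image List.tail

lemma mem_branch {b : ℕ} {k : Fin b} {C : Finset (V b)} {t : V b} :
    t ∈ branch k C ↔ (k :: t) ∈ C := by
  simp only [branch, Finset.mem_image, Finset.mem_filter]
  constructor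
  · rintro ⟨x, ⟨hxC, hxk⟩, rfl⟩
    cases x with
    | nil => simp at hxk
    | cons k' t' =>
      simp only [List.head?_cons, Option.some.injEq] at hxk
      subst hxk; simpa using hxC
  · intro h
    exact ⟨k :: t, ⟨h, rfl⟩, rfl⟩

/-- Reassemble a subtree from its branches. -/
def unbranch {b : ℕ} (f : Fin b → Finset (V b)) : Finset (V b) :=
  insert ([] : V b) (Finset.univ.biUnion fun k => (f k).image (List.cons k))

lemma mem_unbranch {b : ℕ} {f : Fin b → Finset (V b)} {x : V b} :
    x ∈ unbranch f ↔ x = [] ∨ ∃ k t, t ∈ f k ∧ x = k :: t := by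
  simp only [unbranch, Finset.mem_insert, Finset.mem_biUnion, Finset.mem_univ, true_and,
    Finset.mem_image]
  constructor
  · rintro (rfl | ⟨k, t, ht, rfl⟩)
    · exact Or.inl rfl
    · exact Or.inr ⟨k, t, ht, rfl⟩
  · rintro (rfl | ⟨k, t, ht, rfl⟩)
    · exact Or.inl rfl
    · exact Or.inr ⟨k, t, ht, rfl⟩

lemma unbranch_branch {b : ℕ} {C : Finset (V b)} (hC : IsSub C) :
    unbranch (fun k => branch k C) = C := by
  ext x
  rw [mem_unbranch]
  constructor
  · rintro (rfl | ⟨k, t, ht, rfl⟩)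
    · exact hC.1
    · exact mem_branch.1 ht
  · intro hx
    cases x with
    | nil => exact Or.inl rfl
    | cons k t => exact Or.inr ⟨k, t, mem_branch.2 hx, rfl⟩

lemma branch_unbranch {b : ℕ} (f : Fin b → Finset (V b)) (k : Fin b) :
    branch k (unbranch f) = f k := by
  ext t
  rw [mem_branch, mem_unbranch]
  constructor
  · rintro (h | ⟨k', t', ht', h⟩)
    · simp at h
    · obtain ⟨rfl, rfl⟩ : k' = k ∧ t' = t := by
        constructor <;> [skip; skip] <;> injection h <;> simp_all
      exact ht'
  · intro h
    exact Or.inr ⟨k, t, h, rfl⟩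

lemma branch_isSub {b : ℕ} {C : Finset (V b)} (hC : IsSub C) (k : Fin b)
    (hne : (branch k C).Nonempty) : IsSub (branch k C) := by
  constructor
  · obtain ⟨t, ht⟩ := hne
    rw [mem_branch] at ht
    have h1 : (k :: t).take 1 ∈ C := take_mem_of_closed hC.2 ht 1
    simpa [mem_branch] using h1
  · intro t ht htne
    rw [mem_branch] at ht ⊢
    have hd : (k :: t).dropLast ∈ C := hC.2 _ ht (by simp)
    cases t with
    | nil => exact absurd rfl htne
    | cons y l =>
      rwa [List.dropLast_cons₂] at hd

lemma branch_mem_aux {b ℓ : ℕ} {C : Finset (V b)} (hC : C ∈ subtreesOf (ball b (ℓ+1)))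
    (k : Fin b) :
    branch k C ∈ insert (∅ : Finset (V b)) (subtreesOf (ball b ℓ)) := by
  rw [mem_subtreesOf] at hC
  rcases Finset.eq_empty_or_nonempty (branch k C) with h | h
  · simp [h]
  · rw [Finset.mem_insert, mem_subtreesOf]
    refine Or.inr ⟨?_, branch_isSub hC.2 k h⟩
    intro t ht
    rw [mem_branch] at ht
    have := mem_ball.1 (hC.1 ht)
    rw [mem_ball]
    simpa using this

lemma empty_not_mem_subtreesOf {b : ℕ} (A : Finset (V b)) :
    (∅ : Finset (V b)) ∉ subtreesOf A := by
  intro h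
  exact absurd (mem_subtreesOf.1 h).2.1 (by simp)

lemma dropLast_cons_ne {b : ℕ} (k : Fin b) {t : V b} (h : t ≠ []) :
    (k :: t).dropLast = k :: t.dropLast := by
  cases t with
  | nil => exact absurd rfl h
  | cons y l => exact List.dropLast_cons₂

lemma card_eq_branches {b : ℕ} {C : Finset (V b)} (hC : IsSub C) :
    C.card = 1 + ∑ k : Fin b, (branch k C).card := by
  have hdisj : ∀ k ∈ (Finset.univ : Finset (Fin b)), ∀ k' ∈ Finset.univ, k ≠ k' →
      Disjoint ((branch k C).image (List.cons k)) ((branch k' C).image (List.cons k')) := by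
    intro k _ k' _ hkk'
    simp only [Finset.disjoint_left, Finset.mem_image]
    rintro x ⟨t, ht, rfl⟩ ⟨t', ht', h⟩
    injection h with h1 h2
    exact hkk' h1.symm
  have hnotmem : ([] : V b) ∉ Finset.univ.biUnion fun k => (branch k C).image (List.cons k) := by
    simp only [Finset.mem_biUnion, Finset.mem_univ, true_and, Finset.mem_image, not_exists]
    rintro k t ⟨ht, h⟩
    exact (List.cons_ne_nil k t) h
  conv_lhs => rw [← unbranch_branch hC]
  rw [unbranch, Finset.card_insert_of_notMem hnotmem, Finset.card_biUnion hdisj, add_comm]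
  congr 1
  refine Finset.sum_congr rfl fun k _ => ?_
  exact Finset.card_image_of_injective _ (fun t t' h => by injection h)

lemma subtreesOf_ball_zero {b : ℕ} :
    subtreesOf (ball b 0) = {({([] : V b)} : Finset (V b))} := by
  ext C
  rw [mem_subtreesOf, Finset.mem_singleton]
  constructor
  · rintro ⟨hsub, hC⟩
    apply Finset.Subset.antisymm
    · intro x hx
      have := mem_ball.1 (hsub hx)
      simp only [Finset.mem_singleton]
      rw [← List.length_eq_zero_iff]
      omega
    · intro x hx
      rw [Finset.mem_singleton] at hx
      subst hx; exact hC.1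
  · rintro rfl
    refine ⟨?_, by simp, by simp⟩
    intro x hx
    rw [Finset.mem_singleton] at hx
    subst hx
    exact mem_ball.2 (by simp)

lemma sum_subtrees_le {b : ℕ} (z : ℝ) (hz : 0 ≤ z) (hz2 : (1 + 2*z)^b ≤ 2) :
    ∀ ℓ : ℕ, ∑ C ∈ subtreesOf (ball b ℓ), z ^ C.card ≤ 2 * z := by
  intro ℓ
  induction ℓ with
  | zero =>
    rw [subtreesOf_ball_zero]
    simp only [Finset.sum_singleton, Finset.card_singleton, pow_one]
    linarith
  | succ ℓ ih =>
    have key : ∑ C ∈ subtreesOf (ball b (ℓ+1)), z ^ C.card =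
        ∑ f ∈ Fintype.piFinset (fun _ : Fin b => insert (∅ : Finset (V b)) (subtreesOf (ball b ℓ))),
          z * ∏ k : Fin b, z ^ (f k).card := by
      refine Finset.sum_nbij' (fun C => fun k => branch k C) unbranch ?_ ?_ ?_ ?_ ?_
      · intro C hC
        rw [Fintype.mem_piFinset]
        exact fun k => branch_mem_aux hC k
      · intro f hf
        rw [Fintype.mem_piFinset] at hf
        rw [mem_subtreesOf]
        constructor
        · intro x hx
          rw [mem_unbranch] at hx
          rcases hx with rfl | ⟨k, t, ht, rfl⟩
          · exact mem_ball.2 (by simp)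
          · have hft := hf k
            rw [Finset.mem_insert] at hft
            rcases hft with h | h
            · rw [h] at ht; simp at ht
            · have := mem_ball.1 ((mem_subtreesOf.1 h).1 ht)
              rw [mem_ball]
              simpa using Nat.succ_le_succ this
        · constructor
          · simp [unbranch]
          · intro x hx hxne
            rw [mem_unbranch] at hx
            rcases hx with rfl | ⟨k, t, ht, rfl⟩
            · exact absurd rfl hxne
            · rcases eq_or_ne t [] with rfl | htne
              · simp [unbranch]
              · rw [dropLast_cons_ne k htne, mem_unbranch]
                refine Or.inr ⟨k, t.dropLast, ?_, rfl⟩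
                have hfk := hf k
                rw [Finset.mem_insert] at hfk
                rcases hfk with h | h
                · rw [h] at ht; simp at ht
                · exact (mem_subtreesOf.1 h).2.2 _ ht htne
      · intro C hC
        exact unbranch_branch (mem_subtreesOf.1 hC).2
      · intro f hf
        funext k
        exact branch_unbranch f k
      · intro C hC
        rw [card_eq_branches (mem_subtreesOf.1 hC).2, pow_add, pow_one,
          ← Finset.prod_pow_eq_pow_sum]
    have hps := Finset.prod_univ_sum
      (fun _ : Fin b => insert (∅ : Finset (V b)) (subtreesOf (ball b ℓ)))
      (fun _ D => z ^ D.card)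
    rw [key, ← Finset.mul_sum, ← hps]
    have hsum : ∀ k : Fin b,
        (∑ D ∈ insert (∅ : Finset (V b)) (subtreesOf (ball b ℓ)), z ^ D.card) ≤ 1 + 2*z := by
      intro k
      rw [Finset.sum_insert (empty_not_mem_subtreesOf _)]
      simpa using ih
    have hprod : (∏ _k : Fin b, ∑ D ∈ insert (∅ : Finset (V b)) (subtreesOf (ball b ℓ)),
        z ^ D.card) ≤ (1 + 2*z)^b := by
      calc (∏ _k : Fin b, ∑ D ∈ insert (∅ : Finset (V b)) (subtreesOf (ball b ℓ)), z ^ D.card)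
          ≤ ∏ _k : Fin b, (1 + 2*z) := by
            apply Finset.prod_le_prod
            · intro k _
              exact Finset.sum_nonneg fun D _ => pow_nonneg hz _
            · intro k _
              exact hsum k
        _ = (1 + 2*z)^b := by simp [Finset.prod_const]
    calc z * ∏ _k : Fin b, (∑ D ∈ insert (∅ : Finset (V b)) (subtreesOf (ball b ℓ)), z ^ D.card)
        ≤ z * (1 + 2*z)^b := mul_le_mul_of_nonneg_left hprod hz
      _ ≤ z * 2 := mul_le_mul_of_nonneg_left hz2 hz
      _ = 2 * z := mul_comm _ _

/-! ### Glue, cluster and spin flip -/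

lemma glue_mem {b : ℕ} {A : Finset (V b)} {ω : V b → Bool} {σ : {x // x ∈ A} → Bool}
    {x : V b} (hx : x ∈ A) : glue b A ω σ x = σ ⟨x, hx⟩ := by
  simp [glue, hx]

lemma glue_not_mem {b : ℕ} {A : Finset (V b)} {ω : V b → Bool} {σ : {x // x ∈ A} → Bool}
    {x : V b} (hx : x ∉ A) : glue b A ω σ x = ω x := by
  simp [glue, hx]

open Classical in
/-- The minus-cluster of the root. -/
noncomputable def Cl {b : ℕ} (A : Finset (V b)) (ω : V b → Bool) (σ : {x // x ∈ A} → Bool) :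
    Finset (V b) :=
  A.filter (fun x => ∀ k ∈ Finset.range (x.length + 1), glue b A ω σ (x.take k) = false)

lemma mem_Cl {b : ℕ} {A : Finset (V b)} {ω : V b → Bool} {σ : {x // x ∈ A} → Bool}
    {x : V b} :
    x ∈ Cl A ω σ ↔ x ∈ A ∧ ∀ k, k ≤ x.length → glue b A ω σ (x.take k) = false := by
  simp only [Cl, Finset.mem_filter, Finset.mem_range]
  constructor
  · rintro ⟨h1, h2⟩; exact ⟨h1, fun k hk => h2 k (by omega)⟩
  · rintro ⟨h1, h2⟩; exact ⟨h1, fun k hk => h2 k (by omega)⟩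

lemma Cl_subset {b : ℕ} {A : Finset (V b)} {ω : V b → Bool} {σ : {x // x ∈ A} → Bool} :
    Cl A ω σ ⊆ A := fun x hx => (mem_Cl.1 hx).1

lemma Cl_false {b : ℕ} {A : Finset (V b)} {ω : V b → Bool} {σ : {x // x ∈ A} → Bool}
    {x : V b} (hx : x ∈ Cl A ω σ) : glue b A ω σ x = false := by
  have := (mem_Cl.1 hx).2 x.length le_rfl
  simpa using this

lemma Cl_isSub {b : ℕ} {A : Finset (V b)} {ω : V b → Bool} {σ : {x // x ∈ A} → Bool}
    (hA0 : ([] : V b) ∈ A) (hAcl : ∀ x ∈ A, x ≠ ([] : V b) → x.dropLast ∈ A)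
    (hroot : glue b A ω σ ([] : V b) = false) : IsSub (Cl A ω σ) := by
  constructor
  · rw [mem_Cl]
    refine ⟨hA0, fun k hk => ?_⟩
    simp only [List.length_nil, Nat.le_zero] at hk
    simpa [hk] using hroot
  · intro x hx hne
    rw [mem_Cl] at hx ⊢
    have hlen : x.dropLast.length = x.length - 1 := by simp
    refine ⟨hAcl _ hx.1 hne, fun k hk => ?_⟩
    rw [take_dropLast x (by omega)]
    exact hx.2 k (by omega)

lemma mem_Cl_of_parent {b : ℕ} {A : Finset (V b)} {ω : V b → Bool}
    {σ : {x // x ∈ A} → Bool} {y : V b} (hyA : y ∈ A) (hyne : y ≠ ([] : V b))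
    (hpar : y.dropLast ∈ Cl A ω σ) (hval : glue b A ω σ y = false) : y ∈ Cl A ω σ := by
  rw [mem_Cl] at hpar ⊢
  refine ⟨hyA, fun k hk => ?_⟩
  rcases eq_or_lt_of_le hk with rfl | hlt
  · rwa [List.take_length]
  · have hlen : y.dropLast.length = y.length - 1 := by simp
    have := hpar.2 k (by omega)
    rwa [take_dropLast y (by omega)] at this

/-- Flip the spins of `σ` on `C`. -/
def flipc {b : ℕ} {A : Finset (V b)} (C : Finset (V b)) (σ : {x // x ∈ A} → Bool) :
    {x // x ∈ A} → Bool :=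
  fun x => if (x : V b) ∈ C then !(σ x) else σ x

lemma flipc_invol {b : ℕ} {A : Finset (V b)} (C : Finset (V b))
    (σ : {x // x ∈ A} → Bool) : flipc C (flipc C σ) = σ := by
  funext x
  by_cases hx : (x : V b) ∈ C <;> simp [flipc, hx]

lemma glue_flipc_mem {b : ℕ} {A C : Finset (V b)} {ω : V b → Bool}
    {σ : {x // x ∈ A} → Bool} {x : V b} (hx : x ∈ C) (hCA : C ⊆ A) :
    glue b A ω (flipc C σ) x = !(glue b A ω σ x) := by
  rw [glue_mem (hCA hx), glue_mem (hCA hx)]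
  simp [flipc, hx]

lemma glue_flipc_not_mem {b : ℕ} {A C : Finset (V b)} {ω : V b → Bool}
    {σ : {x // x ∈ A} → Bool} {x : V b} (hx : x ∉ C) :
    glue b A ω (flipc C σ) x = glue b A ω σ x := by
  by_cases hxA : x ∈ A
  · rw [glue_mem hxA, glue_mem hxA]
    simp [flipc, hx]
  · rw [glue_not_mem hxA, glue_not_mem hxA]

/-! ### The energy of a flipped configuration -/

lemma Dout_subset_E {b : ℕ} {A C : Finset (V b)}
    (hCA : C ⊆ A) :
    Dout C ⊆ (A ∪ bdry b A).filter
      (fun y => y ≠ ([] : V b) ∧ y ≠ ([] : V b) ∧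
        y.dropLast ∈ A ∪ bdry b A) := by
  intro y hy
  obtain ⟨hy1, hy2⟩ := Finset.mem_sdiff.1 hy
  obtain ⟨x, hxC, hych⟩ := Finset.mem_biUnion.1 hy1
  obtain ⟨k, rfl⟩ := mem_children.1 hych
  have hxA : x ∈ A := hCA hxC
  have hynbr : (x ++ [k]) ∈ nbrs b x := by
    rw [nbrs, Finset.mem_union]
    exact Or.inl (Finset.mem_image.2 ⟨k, Finset.mem_univ k, rfl⟩)
  have hyun : (x ++ [k]) ∈ A ∪ bdry b A := by
    rw [bdry, Finset.union_sdiff_self_eq_union]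
    exact Finset.mem_union_right _ (Finset.mem_biUnion.2 ⟨x, hxA, hynbr⟩)
  refine Finset.mem_filter.2 ⟨hyun, by simp, by simp, ?_⟩
  rw [List.dropLast_concat]
  exact Finset.mem_union_left _ hxA

lemma energy_flip {b : ℕ} (β h : ℝ) (ω : V b → Bool) (A : Finset (V b))
    (hA0 : ([] : V b) ∈ A) (hAcl : ∀ x ∈ A, x ≠ ([] : V b) → x.dropLast ∈ A)
    (σ : {x // x ∈ A} → Bool) (hσ : glue b A ω σ ([] : V b) = false) :
    energy b β h A [] (glue b A ω (flipc (Cl A ω σ) σ)) =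
      energy b β h A [] (glue b A ω σ)
      + β * ((2 * ∑ y ∈ Dout (Cl A ω σ), spin (glue b A ω σ y))
          + h * (2 * ((Cl A ω σ).card : ℝ))) := by
  set C := Cl A ω σ with hCdef
  set c : V b → Bool := glue b A ω σ with hcdef
  set c' : V b → Bool := glue b A ω (flipc C σ) with hcdef'
  set E : Finset (V b) := (A ∪ bdry b A).filter
      (fun y => y ≠ ([] : V b) ∧ y ≠ ([] : V b) ∧ y.dropLast ∈ A ∪ bdry b A) with hEdef
  have hCsub : C ⊆ A := Cl_subset
  have hflip_mem : ∀ x, x ∈ C → c' x = !(c x) := fun x hx => glue_flipc_mem hx hCsub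
  have hflip_not : ∀ x, x ∉ C → c' x = c x := fun x hx => glue_flipc_not_mem hx
  have hfalse : ∀ x, x ∈ C → c x = false := fun x hx => Cl_false hx
  have hedge : ∀ y ∈ E, spin (c' y.dropLast) * spin (c' y) =
      spin (c y.dropLast) * spin (c y) + (if y ∈ Dout C then 2 * spin (c y) else 0) := by
    intro y hyE
    obtain ⟨hyu, hyne, -, hydu⟩ := Finset.mem_filter.1 hyE
    by_cases hx : y.dropLast ∈ C
    · by_cases hy : y ∈ C
      · have hynd : y ∉ Dout C := fun hc => (Finset.mem_sdiff.1 hc).2 hy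
        rw [if_neg hynd, hflip_mem _ hx, hflip_mem _ hy, hfalse _ hx, hfalse _ hy]
        norm_num [spin]
      · have hyD : y ∈ Dout C := by
          refine Finset.mem_sdiff.2 ⟨Finset.mem_biUnion.2 ⟨y.dropLast, hx, ?_⟩, hy⟩
          exact mem_children.2 ⟨y.getLast hyne, (List.dropLast_append_getLast hyne).symm⟩
        rw [if_pos hyD, hflip_mem _ hx, hflip_not _ hy, hfalse _ hx]
        cases hcy : c y <;> norm_num [spin]
    · have hy : y ∉ C := by
        intro hyC
        apply hx
        have hyA : y ∈ A := hCsub hyC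
        have hxA : y.dropLast ∈ A := hAcl _ hyA hyne
        rw [hCdef, mem_Cl] at hyC ⊢
        refine ⟨hxA, fun k hk => ?_⟩
        have hlen : y.dropLast.length = y.length - 1 := by simp
        rw [take_dropLast y (by omega)]
        exact hyC.2 k (by omega)
      have hynd : y ∉ Dout C := by
        intro hc
        obtain ⟨x', hx', hych⟩ := Finset.mem_biUnion.1 (Finset.mem_sdiff.1 hc).1
        obtain ⟨k, rfl⟩ := mem_children.1 hych
        rw [List.dropLast_concat] at hx
        exact hx hx'
      rw [if_neg hynd, hflip_not _ hx, hflip_not _ hy, add_zero]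
  have hfield : ∀ x ∈ A, spin (c' x) = spin (c x) + (if x ∈ C then 2 else 0) := by
    intro x _
    by_cases hx : x ∈ C
    · rw [if_pos hx, hflip_mem _ hx, hfalse _ hx]
      norm_num [spin]
    · rw [if_neg hx, hflip_not _ hx, add_zero]
  have h1 : ∑ y ∈ E, spin (c' y.dropLast) * spin (c' y) =
      (∑ y ∈ E, spin (c y.dropLast) * spin (c y)) + 2 * ∑ y ∈ Dout C, spin (c y) := by
    have hs : ∑ y ∈ E, spin (c' y.dropLast) * spin (c' y) =
        ∑ y ∈ E, (spin (c y.dropLast) * spin (c y) +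
          if y ∈ Dout C then 2 * spin (c y) else 0) :=
      Finset.sum_congr rfl hedge
    rw [hs, Finset.sum_add_distrib]
    congr 1
    rw [Finset.sum_ite_mem, Finset.inter_eq_right.2 (Dout_subset_E hCsub), Finset.mul_sum]
  have h2 : ∑ x ∈ A, spin (c' x) = (∑ x ∈ A, spin (c x)) + 2 * (C.card : ℝ) := by
    have hs : ∑ x ∈ A, spin (c' x) =
        ∑ x ∈ A, (spin (c x) + if x ∈ C then 2 else 0) :=
      Finset.sum_congr rfl hfield
    rw [hs, Finset.sum_add_distrib]
    congr 1
    rw [Finset.sum_ite_mem, Finset.inter_eq_right.2 hCsub, Finset.sum_const,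
      nsmul_eq_mul, mul_comm]
  have e1 : energy b β h A [] c' =
      β * ((∑ y ∈ E, spin (c' y.dropLast) * spin (c' y)) + h * ∑ x ∈ A, spin (c' x)) := rfl
  have e2 : energy b β h A [] c =
      β * ((∑ y ∈ E, spin (c y.dropLast) * spin (c y)) + h * ∑ x ∈ A, spin (c x)) := rfl
  rw [e1, e2, h1, h2]
  ring


/-! ### Arithmetic helpers -/

lemma exp_half_le_two : Real.exp (2⁻¹ : ℝ) ≤ 2 := by
  have h1 : Real.exp (2⁻¹ : ℝ) ^ 2 = Real.exp 1 := by
    rw [← Real.exp_nat_mul]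
    norm_num
  nlinarith [Real.exp_one_lt_d9, Real.exp_pos (2⁻¹ : ℝ)]

lemma one_add_two_mul_pow_le {b : ℕ} {z : ℝ} (hz : 0 ≤ z) (h4 : 4*(b:ℝ)*z ≤ 1) :
    (1 + 2*z)^b ≤ 2 := by
  have h1 : (1 + 2*z)^b ≤ (Real.exp (2*z))^b := by
    apply pow_le_pow_left₀ (by linarith)
    linarith [Real.add_one_le_exp (2*z)]
  have h2 : (Real.exp (2*z))^b = Real.exp ((b:ℝ) * (2*z)) := (Real.exp_nat_mul _ b).symm
  have hb0 : (0:ℝ) ≤ (b:ℝ) := Nat.cast_nonneg b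
  have h3 : (b:ℝ) * (2*z) ≤ 2⁻¹ := by nlinarith
  calc (1 + 2*z)^b ≤ (Real.exp (2*z))^b := h1
    _ = Real.exp ((b:ℝ) * (2*z)) := h2
    _ ≤ Real.exp (2⁻¹ : ℝ) := Real.exp_le_exp.2 h3
    _ ≤ 2 := exp_half_le_two

lemma four_b_le_exp {b : ℕ} (hb : 2 ≤ b) : 4*(b:ℝ) ≤ Real.exp ((b:ℝ)+2) := by
  have h1 : ((b:ℝ)+2)/2 + 1 ≤ Real.exp (((b:ℝ)+2)/2) := Real.add_one_le_exp _
  have h2 : Real.exp (((b:ℝ)+2)/2) ^ 2 = Real.exp ((b:ℝ)+2) := by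
    rw [← Real.exp_nat_mul]
    norm_num [mul_div_cancel₀]
  have hb2 : (2:ℝ) ≤ (b:ℝ) := by exact_mod_cast hb
  nlinarith [sq_nonneg ((b:ℝ) - 4), Real.exp_pos (((b:ℝ)+2)/2)]

/-! ### The Peierls estimate -/
set_option maxHeartbeats 2000000 in

lemma peierls {b : ℕ} (hb : 2 ≤ b) {a β h : ℝ} (ha : 0 < a)
    (hβ : ((b:ℝ)+2)/a ≤ β) (hh : -((b : ℝ) - 1) + a ≤ h) {ℓ : ℕ} {ω : V b → Bool}
    (hroot : ω ([] : V b) = true)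
    (hgood : ∀ C ∈ subtreesOf (ball b ℓ),
      4 * (((Dout C).filter (fun y => ω y = false)).card : ℝ) ≤ a * C.card) :
    (∑ σ ∈ Finset.univ.filter
        (fun σ : {x // x ∈ region b ℓ ω} → Bool =>
          glue b (region b ℓ ω) ω σ ([] : V b) = false),
        Real.exp (energy b β h (region b ℓ ω) [] (glue b (region b ℓ ω) ω σ)))
      ≤ Real.exp (-(2*β)) *
        ∑ σ ∈ Finset.univ.filter
          (fun σ : {x // x ∈ region b ℓ ω} → Bool =>
            glue b (region b ℓ ω) ω σ ([] : V b) = true),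
          Real.exp (energy b β h (region b ℓ ω) [] (glue b (region b ℓ ω) ω σ)) := by
  set A := region b ℓ ω with hAdef
  have hA0 : ([] : V b) ∈ A := root_mem_region hroot
  have hAcl : ∀ x ∈ A, x ≠ ([] : V b) → x.dropLast ∈ A := region_closed ω
  have hβa : (b:ℝ) + 2 ≤ β * a := by
    rw [div_le_iff₀ ha] at hβ
    linarith
  have hb2 : (2:ℝ) ≤ (b:ℝ) := by exact_mod_cast hb
  have hβ0 : 0 < β := by nlinarith
  set q : ℝ := Real.exp (-(β*a)) with hqdef
  have hq0 : 0 ≤ q := Real.exp_nonneg _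
  have h4bq : 4*(b:ℝ)*q ≤ 1 := by
    have hq1 : q ≤ Real.exp (-((b:ℝ)+2)) := Real.exp_le_exp.2 (by linarith)
    have h2 : 4*(b:ℝ)*q ≤ 4*(b:ℝ) * Real.exp (-((b:ℝ)+2)) :=
      mul_le_mul_of_nonneg_left hq1 (by positivity)
    have h3 : 4*(b:ℝ) * Real.exp (-((b:ℝ)+2)) ≤ 1 := by
      rw [Real.exp_neg, ← div_eq_mul_inv, div_le_one (Real.exp_pos _)]
      exact four_b_le_exp hb
    linarith
  have h2q : 2*q ≤ 1 := by
    have h5 : (2:ℝ) ≤ Real.exp (β*a) := by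
      have := Real.add_one_le_exp (β*a)
      linarith
    rw [hqdef, Real.exp_neg, ← div_eq_mul_inv, div_le_one (Real.exp_pos _)]
    exact h5
  -- notation for the two partition sums
  set W : ({x // x ∈ A} → Bool) → ℝ :=
    fun σ => Real.exp (energy b β h A [] (glue b A ω σ)) with hWdef
  set Sm : Finset ({x // x ∈ A} → Bool) :=
    Finset.univ.filter (fun σ => glue b A ω σ ([] : V b) = false) with hSmdef
  set Sp : Finset ({x // x ∈ A} → Bool) :=
    Finset.univ.filter (fun σ => glue b A ω σ ([] : V b) = true) with hSpdef
  have hNp0 : 0 ≤ ∑ σ ∈ Sp, W σ := Finset.sum_nonneg fun σ _ => Real.exp_nonneg _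
  have hmaps : ∀ σ ∈ Sm, Cl A ω σ ∈ subtreesOf A := by
    intro σ hσ
    rw [hSmdef, Finset.mem_filter] at hσ
    exact mem_subtreesOf.2 ⟨Cl_subset, Cl_isSub hA0 hAcl hσ.2⟩
  have hfib := Finset.sum_fiberwise_of_maps_to hmaps W
  have hperC : ∀ C ∈ subtreesOf A,
      (∑ σ ∈ Sm.filter (fun σ => Cl A ω σ = C), W σ)
        ≤ (Real.exp (-(2*β)) * q ^ C.card) * ∑ σ ∈ Sp, W σ := by
    intro C hC
    obtain ⟨hCA, hCsub⟩ := mem_subtreesOf.1 hC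
    have hCball : C ∈ subtreesOf (ball b ℓ) :=
      subtreesOf_mono (region_subset_ball ω) hC
    have hgC := hgood C hCball
    have hn1 : 1 ≤ C.card := Finset.card_pos.2 ⟨_, hCsub.1⟩
    have hn1R : (1:ℝ) ≤ (C.card : ℝ) := by exact_mod_cast hn1
    have hstep : ∀ σ ∈ Sm.filter (fun σ => Cl A ω σ = C),
        W σ ≤ (Real.exp (-(2*β)) * q ^ C.card) * W (flipc C σ) := by
      intro σ hσ'
      obtain ⟨hσm, hCl⟩ := Finset.mem_filter.1 hσ'
      rw [hSmdef, Finset.mem_filter] at hσm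
      have hσr : glue b A ω σ ([] : V b) = false := hσm.2
      have hEF := energy_flip β h ω A hA0 hAcl σ hσr
      rw [hCl] at hEF
      -- lower bound on the spin sum over the outer boundary of C
      set o : ℕ := ((Dout C).filter (fun y => ω y = false)).card with hodef
      have hspin : ∀ y ∈ Dout C,
          (1 : ℝ) - 2 * (if ω y = false then (1:ℝ) else 0) ≤ spin (glue b A ω σ y) := by
        intro y hyD
        by_cases hωy : ω y = false
        · rw [if_pos hωy]
          cases hgy : glue b A ω σ y <;> norm_num [spin]
        · rw [if_neg hωy]
          have hωyt : ω y = true := by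
            cases hωy2 : ω y
            · exact absurd hωy2 hωy
            · rfl
          obtain ⟨hyb, hyC⟩ := Finset.mem_sdiff.1 hyD
          obtain ⟨x', hx'C, hych⟩ := Finset.mem_biUnion.1 hyb
          obtain ⟨k, rfl⟩ := mem_children.1 hych
          have hgy : glue b A ω σ (x' ++ [k]) = true := by
            by_cases hyA : (x' ++ [k]) ∈ A
            · cases hgy2 : glue b A ω σ (x' ++ [k])
              · exfalso
                apply hyC
                rw [← hCl]
                apply mem_Cl_of_parent hyA (by simp)
                · rw [List.dropLast_concat, hCl]
                  exact hx'C
                · exact hgy2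
              · rfl
            · rw [glue_not_mem hyA]
              exact hωyt
          rw [hgy]
          norm_num [spin]
      have hsum_spin : ((Dout C).card : ℝ) - 2 * (o : ℝ) ≤
          ∑ y ∈ Dout C, spin (glue b A ω σ y) := by
        have hl : ∑ y ∈ Dout C, ((1 : ℝ) - 2 * (if ω y = false then (1:ℝ) else 0)) =
            ((Dout C).card : ℝ) - 2 * (o : ℝ) := by
          rw [Finset.sum_sub_distrib, Finset.sum_const, ← Finset.mul_sum, Finset.sum_boole,
            hodef]
          simp [nsmul_eq_mul]
        rw [← hl]
        exact Finset.sum_le_sum hspin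
      have hcard : ((Dout C).card : ℝ) = (b:ℝ) * C.card - C.card + 1 := card_Dout_real hCsub
      -- energy increment bound
      have hincr : 2 + a * (C.card : ℝ) ≤
          (2 * ∑ y ∈ Dout C, spin (glue b A ω σ y)) + h * (2 * (C.card : ℝ)) := by
        have hhn : (-((b:ℝ) - 1) + a) * (2 * (C.card : ℝ)) ≤ h * (2 * (C.card : ℝ)) :=
          mul_le_mul_of_nonneg_right hh (by positivity)
        nlinarith [hsum_spin, hgC, hcard]
      have henergy : energy b β h A [] (glue b A ω σ) ≤
          energy b β h A [] (glue b A ω (flipc C σ)) - (2*β + β * a * (C.card : ℝ)) := by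
        have hβincr : 2*β + β * a * (C.card : ℝ) ≤
            β * ((2 * ∑ y ∈ Dout C, spin (glue b A ω σ y)) + h * (2 * (C.card : ℝ))) := by
          have := mul_le_mul_of_nonneg_left hincr (le_of_lt hβ0)
          nlinarith
        linarith [hEF]
      have hcoef : Real.exp (-(2*β + β * a * (C.card : ℝ))) =
          Real.exp (-(2*β)) * q ^ C.card := by
        rw [hqdef, ← Real.exp_nat_mul, ← Real.exp_add]
        congr 1
        push_cast
        ring
      calc W σ ≤ Real.exp (energy b β h A [] (glue b A ω (flipc C σ))
            - (2*β + β * a * (C.card : ℝ))) := Real.exp_le_exp.2 henergy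
        _ = (Real.exp (-(2*β)) * q ^ C.card) * W (flipc C σ) := by
            rw [Real.exp_sub, ← hcoef, Real.exp_neg, div_eq_mul_inv]
            exact mul_comm _ _
    have himg : ∑ σ ∈ Sm.filter (fun σ => Cl A ω σ = C), W (flipc C σ) ≤
        ∑ σ ∈ Sp, W σ := by
      have hinj : ∀ σ₁ ∈ Sm.filter (fun σ => Cl A ω σ = C),
          ∀ σ₂ ∈ Sm.filter (fun σ => Cl A ω σ = C), flipc C σ₁ = flipc C σ₂ → σ₁ = σ₂ := by
        intro σ₁ _ σ₂ _ heq
        have := congrArg (flipc C) heq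
        rwa [flipc_invol, flipc_invol] at this
      rw [← Finset.sum_image hinj]
      apply Finset.sum_le_sum_of_subset_of_nonneg
      · intro τ hτ
        obtain ⟨σ', hσ', rfl⟩ := Finset.mem_image.1 hτ
        obtain ⟨hσm, hCl⟩ := Finset.mem_filter.1 hσ'
        rw [hSmdef, Finset.mem_filter] at hσm
        rw [hSpdef, Finset.mem_filter]
        refine ⟨Finset.mem_univ _, ?_⟩
        have h0C : ([] : V b) ∈ C := hCsub.1
        rw [glue_flipc_mem h0C hCA, hσm.2]
        rfl
      · intro τ _ _
        exact Real.exp_nonneg _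
    calc (∑ σ ∈ Sm.filter (fun σ => Cl A ω σ = C), W σ)
        ≤ ∑ σ ∈ Sm.filter (fun σ => Cl A ω σ = C),
            (Real.exp (-(2*β)) * q ^ C.card) * W (flipc C σ) := Finset.sum_le_sum hstep
      _ = (Real.exp (-(2*β)) * q ^ C.card) *
            ∑ σ ∈ Sm.filter (fun σ => Cl A ω σ = C), W (flipc C σ) := by
          rw [Finset.mul_sum]
      _ ≤ (Real.exp (-(2*β)) * q ^ C.card) * ∑ σ ∈ Sp, W σ := by
          apply mul_le_mul_of_nonneg_left himg
          positivity
  have hsubsum : ∑ C ∈ subtreesOf A, q ^ C.card ≤ 2 * q := by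
    refine le_trans (Finset.sum_le_sum_of_subset_of_nonneg
      (subtreesOf_mono (region_subset_ball ω)) ?_) (sum_subtrees_le q hq0
        (one_add_two_mul_pow_le hq0 h4bq) ℓ)
    intro C _ _
    positivity
  calc ∑ σ ∈ Sm, W σ = ∑ C ∈ subtreesOf A, ∑ σ ∈ Sm.filter (fun σ => Cl A ω σ = C), W σ :=
        hfib.symm
    _ ≤ ∑ C ∈ subtreesOf A, (Real.exp (-(2*β)) * q ^ C.card) * ∑ σ ∈ Sp, W σ :=
        Finset.sum_le_sum hperC
    _ = (Real.exp (-(2*β)) * ∑ C ∈ subtreesOf A, q ^ C.card) * ∑ σ ∈ Sp, W σ := by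
        rw [← Finset.sum_mul, ← Finset.mul_sum]
    _ ≤ (Real.exp (-(2*β)) * 1) * ∑ σ ∈ Sp, W σ := by
        apply mul_le_mul_of_nonneg_right _ hNp0
        apply mul_le_mul_of_nonneg_left _ (Real.exp_nonneg _)
        linarith
    _ = Real.exp (-(2*β)) * ∑ σ ∈ Sp, W σ := by ring


/-! ### From the Peierls estimate to the ratio bound -/

set_option maxHeartbeats 1000000 in
lemma RfinE_le {b : ℕ} (hb : 2 ≤ b) {a β h : ℝ} (ha : 0 < a)
    (hβ : ((b:ℝ)+2)/a ≤ β) (hh : -((b : ℝ) - 1) + a ≤ h) {ℓ : ℕ} {ω : V b → Bool}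
    (hroot : ω ([] : V b) = true)
    (hgood : ∀ C ∈ subtreesOf (ball b ℓ),
      4 * (((Dout C).filter (fun y => ω y = false)).card : ℝ) ≤ a * C.card) :
    RfinE b β h ℓ ω ≤ ENNReal.ofReal (Real.exp (-(2*β))) := by
  rw [RfinE, if_pos hroot]
  set A := region b ℓ ω with hAdef
  have hA0 : ([] : V b) ∈ A := root_mem_region hroot
  set W : ({x // x ∈ A} → Bool) → ℝ :=
    fun σ => Real.exp (energy b β h A [] (glue b A ω σ)) with hWdef
  set Sm : Finset ({x // x ∈ A} → Bool) :=
    Finset.univ.filter (fun σ => glue b A ω σ ([] : V b) = false) with hSmdef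
  set Sp : Finset ({x // x ∈ A} → Bool) :=
    Finset.univ.filter (fun σ => glue b A ω σ ([] : V b) = true) with hSpdef
  have hpeierls : ∑ σ ∈ Sm, W σ ≤ Real.exp (-(2*β)) * ∑ σ ∈ Sp, W σ :=
    peierls hb ha hβ hh hroot hgood
  have hNp : 0 < ∑ σ ∈ Sp, W σ := by
    apply Finset.sum_pos (fun σ _ => Real.exp_pos _)
    refine ⟨fun _ => true, ?_⟩
    rw [hSpdef, Finset.mem_filter]
    exact ⟨Finset.mem_univ _, by rw [glue_mem hA0]⟩
  have hD : 0 < ∑ σ : {x // x ∈ A} → Bool, W σ := by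
    apply Finset.sum_pos (fun σ _ => Real.exp_pos _)
    exact ⟨fun _ => true, Finset.mem_univ _⟩
  have hnum_m : (∑ σ : {x // x ∈ A} → Bool,
      W σ * (if glue b A ω σ ([] : V b) = false then (1:ℝ) else 0)) = ∑ σ ∈ Sm, W σ := by
    rw [hSmdef, Finset.sum_filter]
    apply Finset.sum_congr rfl
    intro σ _
    by_cases hσ : glue b A ω σ ([] : V b) = false <;> simp [hσ]
  have hnum_p : (∑ σ : {x // x ∈ A} → Bool,
      W σ * (if glue b A ω σ ([] : V b) = true then (1:ℝ) else 0)) = ∑ σ ∈ Sp, W σ := by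
    rw [hSpdef, Finset.sum_filter]
    apply Finset.sum_congr rfl
    intro σ _
    by_cases hσ : glue b A ω σ ([] : V b) = true <;> simp [hσ]
  have hgm : gibbsExp b β h A [] ω (fun c => if c ([] : V b) = false then 1 else 0) =
      (∑ σ ∈ Sm, W σ) / (∑ σ : {x // x ∈ A} → Bool, W σ) := by
    rw [gibbsExp, ← hnum_m]
  have hgp : gibbsExp b β h A [] ω (fun c => if c ([] : V b) = true then 1 else 0) =
      (∑ σ ∈ Sp, W σ) / (∑ σ : {x // x ∈ A} → Bool, W σ) := by
    rw [gibbsExp, ← hnum_p]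
  rw [hgm, hgp]
  have hratio : ((∑ σ ∈ Sm, W σ) / (∑ σ : {x // x ∈ A} → Bool, W σ)) /
      ((∑ σ ∈ Sp, W σ) / (∑ σ : {x // x ∈ A} → Bool, W σ)) =
      (∑ σ ∈ Sm, W σ) / (∑ σ ∈ Sp, W σ) := by
    rw [div_div_div_cancel_right₀ (ne_of_gt hD)]
  rw [hratio]
  apply ENNReal.ofReal_le_ofReal
  rw [div_le_iff₀ hNp]
  linarith [hpeierls]

/-! ### Probability estimates -/

lemma nil_not_mem_Dout {b : ℕ} {C : Finset (V b)} : ([] : V b) ∉ Dout C := by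
  intro hmem
  obtain ⟨x, _, hch⟩ := Finset.mem_biUnion.1 (Finset.mem_sdiff.1 hmem).1
  obtain ⟨k, hk⟩ := mem_children.1 hch
  simp at hk

lemma prob_root_true {b : ℕ} {p : ℝ} {P : Measure (V b → Bool)}
    (hP : IsBernoulliProductRoot b p P) : P {ω | ω ([] : V b) = true} = 1 := by
  have := hP.2 ∅ (fun _ => true) (by simp)
  simpa using this

lemma prob_root_false {b : ℕ} {p : ℝ} {P : Measure (V b → Bool)}
    (hP : IsBernoulliProductRoot b p P) : P {ω | ¬ (ω ([] : V b) = true)} = 0 := by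
  have hmeas : MeasurableSet {ω : V b → Bool | ω ([] : V b) = true} := by
    have heq : {ω : V b → Bool | ω ([] : V b) = true} =
        (fun ω : V b → Bool => ω ([] : V b)) ⁻¹' {true} := by
      ext ω; simp
    rw [heq]
    exact (measurable_pi_apply _) (measurableSet_singleton true)
  haveI := hP.1
  have hcompl : {ω : V b → Bool | ¬ (ω ([] : V b) = true)} =
      {ω : V b → Bool | ω ([] : V b) = true}ᶜ := rfl
  rw [hcompl, measure_compl hmeas (measure_ne_top P _), prob_root_true hP]
  simp

lemma prob_all_false {b : ℕ} {p : ℝ} {P : Measure (V b → Bool)}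
    (hP : IsBernoulliProductRoot b p P) (hp1 : p ≤ 1) (F : Finset (V b))
    (h0 : ([] : V b) ∉ F) :
    P {ω | ∀ x ∈ F, ω x = false} ≤ ENNReal.ofReal ((1-p) ^ F.card) := by
  have hsub : {ω : V b → Bool | ∀ x ∈ F, ω x = false} ⊆
      {ω : V b → Bool | ω ([] : V b) = true ∧ ∀ x ∈ F, ω x = (fun _ => false) x} ∪
      {ω : V b → Bool | ¬ (ω ([] : V b) = true)} := by
    intro ω hω
    by_cases hr : ω ([] : V b) = true
    · exact Or.inl ⟨hr, hω⟩
    · exact Or.inr hr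
  calc P {ω | ∀ x ∈ F, ω x = false}
      ≤ P ({ω : V b → Bool | ω ([] : V b) = true ∧ ∀ x ∈ F, ω x = (fun _ => false) x} ∪
          {ω : V b → Bool | ¬ (ω ([] : V b) = true)}) := measure_mono hsub
    _ ≤ P {ω : V b → Bool | ω ([] : V b) = true ∧ ∀ x ∈ F, ω x = (fun _ => false) x} +
          P {ω : V b → Bool | ¬ (ω ([] : V b) = true)} := measure_union_le _ _
    _ = (∏ x ∈ F, ENNReal.ofReal (if (fun _ : V b => false) x then p else 1 - p)) + 0 := by
        rw [hP.2 F _ h0, prob_root_false hP]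
    _ = ENNReal.ofReal ((1-p) ^ F.card) := by
        rw [add_zero]
        simp only [if_neg (Bool.false_ne_true ∘ (by exact fun h => h))]
        rw [Finset.prod_const, ← ENNReal.ofReal_pow (by linarith)]

set_option maxHeartbeats 1000000 in
lemma prob_bad {b : ℕ} {a p : ℝ} (ha : 0 < a) (hp0 : 0 ≤ p) (hp1 : p < 1)
    {P : Measure (V b → Bool)} (hP : IsBernoulliProductRoot b p P) (ℓ : ℕ)
    (h4bz : 4*(b:ℝ)*((2:ℝ)^b * (1-p) ^ ((a:ℝ)/8)) ≤ 1) :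
    P {ω | ∃ C ∈ subtreesOf (ball b ℓ),
        a * C.card < 4 * (((Dout C).filter (fun y => ω y = false)).card : ℝ)}
      ≤ ENNReal.ofReal (Real.sqrt (1-p) *
          (2 * ((2:ℝ)^b * (1-p) ^ ((a:ℝ)/8)))) := by
  set ε : ℝ := 1 - p with hεdef
  have hε0 : 0 < ε := by linarith
  have hε1 : ε ≤ 1 := by linarith
  set z : ℝ := (2:ℝ)^b * ε ^ ((a:ℝ)/8) with hzdef
  have hz0 : 0 ≤ z := by positivity
  -- per subtree estimate
  have hC1 : ∀ C ∈ subtreesOf (ball b ℓ),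
      P {ω | a * C.card < 4 * (((Dout C).filter (fun y => ω y = false)).card : ℝ)}
        ≤ ENNReal.ofReal (Real.sqrt ε * z ^ C.card) := by
    intro C hC
    obtain ⟨hCA, hCsub⟩ := mem_subtreesOf.1 hC
    have hn1 : 1 ≤ C.card := Finset.card_pos.2 ⟨_, hCsub.1⟩
    have hn1R : (1:ℝ) ≤ (C.card : ℝ) := by exact_mod_cast hn1
    set n := C.card with hndef
    set m := Nat.floor (a * n / 4) + 1 with hmdef
    have hsub : {ω : V b → Bool |
        a * C.card < 4 * (((Dout C).filter (fun y => ω y = false)).card : ℝ)} ⊆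
        ⋃ O ∈ (Dout C).powersetCard m, {ω : V b → Bool | ∀ x ∈ O, ω x = false} := by
      intro ω hω
      have hω' : a * n / 4 < (((Dout C).filter (fun y => ω y = false)).card : ℝ) := by
        have := Set.mem_setOf_eq ▸ hω
        linarith
      have hm : m ≤ ((Dout C).filter (fun y => ω y = false)).card := by
        rw [hmdef]
        have := (Nat.floor_lt (by positivity)).2 hω'
        omega
      obtain ⟨O, hOsub, hOcard⟩ := Finset.exists_subset_card_eq hm
      refine Set.mem_iUnion₂.2 ⟨O, ?_, ?_⟩
      · exact Finset.mem_powersetCard.2 ⟨hOsub.trans (Finset.filter_subset _ _), hOcard⟩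
      · intro x hx
        exact (Finset.mem_filter.1 (hOsub hx)).2
    have hDcard : (Dout C).card ≤ b * n := by
      have hcd := card_Dout hCsub
      rw [← hndef] at hcd
      omega
    have hcount : ((Dout C).powersetCard m).card ≤ 2 ^ (b * n) := by
      have h1 : (Dout C).powersetCard m ⊆ (Dout C).powerset := fun O hO =>
        Finset.mem_powerset.2 (Finset.mem_powersetCard.1 hO).1
      calc ((Dout C).powersetCard m).card ≤ ((Dout C).powerset).card :=
            Finset.card_le_card h1
        _ = 2 ^ (Dout C).card := Finset.card_powerset _
        _ ≤ 2 ^ (b * n) := Nat.pow_le_pow_right (by norm_num) hDcard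
    -- real-number inequality : ε^m ≤ √ε · (ε^{a/8})^n
    have hεm : ε ^ m ≤ Real.sqrt ε * (ε ^ ((a:ℝ)/8)) ^ n := by
      have hmR1 : (1:ℝ) ≤ (m : ℝ) := by exact_mod_cast Nat.one_le_iff_ne_zero.2 (by omega)
      have hmR2 : a * n / 4 ≤ (m : ℝ) := by
        rw [hmdef]
        push_cast
        linarith [Nat.lt_floor_add_one (a * n / 4)]
      have hexp : (1:ℝ)/2 + (a/8) * n ≤ (m : ℝ) := by
        rcases le_or_gt (a * (n:ℝ) / 4) 1 with hc | hc
        · nlinarith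
        · nlinarith
      have h1 : ε ^ m = ε ^ ((m : ℝ)) := by
        rw [Real.rpow_natCast]
      have h2 : Real.sqrt ε * (ε ^ ((a:ℝ)/8)) ^ n = ε ^ ((1:ℝ)/2 + (a/8) * n) := by
        rw [Real.rpow_add hε0, Real.sqrt_eq_rpow, ← Real.rpow_natCast (ε ^ ((a:ℝ)/8)) n,
          ← Real.rpow_mul (le_of_lt hε0)]
      rw [h1, h2]
      exact Real.rpow_le_rpow_of_exponent_ge hε0 hε1 hexp
    calc P {ω | a * C.card < 4 * (((Dout C).filter (fun y => ω y = false)).card : ℝ)}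
        ≤ P (⋃ O ∈ (Dout C).powersetCard m, {ω : V b → Bool | ∀ x ∈ O, ω x = false}) :=
          measure_mono hsub
      _ ≤ ∑ O ∈ (Dout C).powersetCard m, P {ω : V b → Bool | ∀ x ∈ O, ω x = false} :=
          measure_biUnion_finset_le _ _
      _ ≤ ∑ O ∈ (Dout C).powersetCard m, ENNReal.ofReal (ε ^ m) := by
          apply Finset.sum_le_sum
          intro O hO
          obtain ⟨hOsub, hOcard⟩ := Finset.mem_powersetCard.1 hO
          have h0O : ([] : V b) ∉ O := fun hc => nil_not_mem_Dout (hOsub hc)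
          have := prob_all_false hP (le_of_lt hp1) O h0O
          rwa [hOcard] at this
      _ = (((Dout C).powersetCard m).card : ℝ≥0∞) * ENNReal.ofReal (ε ^ m) := by
          rw [Finset.sum_const, nsmul_eq_mul]
      _ ≤ ((2 ^ (b*n) : ℕ) : ℝ≥0∞) * ENNReal.ofReal (ε ^ m) := by
          apply mul_le_mul_left
          exact_mod_cast hcount
      _ = ENNReal.ofReal ((2:ℝ) ^ (b*n) * ε ^ m) := by
          rw [ENNReal.ofReal_mul (by positivity)]
          congr 1
          rw [← ENNReal.ofReal_natCast]
          congr 1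
          push_cast
          ring
      _ ≤ ENNReal.ofReal (Real.sqrt ε * z ^ n) := by
          apply ENNReal.ofReal_le_ofReal
          have hz_expand : z ^ n = (2:ℝ)^(b*n) * (ε ^ ((a:ℝ)/8))^n := by
            rw [hzdef, mul_pow, ← pow_mul]
          rw [hz_expand]
          calc (2:ℝ) ^ (b*n) * ε ^ m ≤ (2:ℝ)^(b*n) * (Real.sqrt ε * (ε ^ ((a:ℝ)/8)) ^ n) :=
                mul_le_mul_of_nonneg_left hεm (by positivity)
            _ = Real.sqrt ε * ((2:ℝ)^(b*n) * (ε ^ ((a:ℝ)/8))^n) := by ring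
  -- union bound over subtrees
  have hbig : {ω : V b → Bool | ∃ C ∈ subtreesOf (ball b ℓ),
      a * C.card < 4 * (((Dout C).filter (fun y => ω y = false)).card : ℝ)} ⊆
      ⋃ C ∈ subtreesOf (ball b ℓ),
        {ω : V b → Bool | a * C.card < 4 * (((Dout C).filter (fun y => ω y = false)).card : ℝ)} := by
    intro ω hω
    obtain ⟨C, hC, hlt⟩ := hω
    exact Set.mem_biUnion hC hlt
  calc P {ω | ∃ C ∈ subtreesOf (ball b ℓ),
        a * C.card < 4 * (((Dout C).filter (fun y => ω y = false)).card : ℝ)}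
      ≤ P (⋃ C ∈ subtreesOf (ball b ℓ),
          {ω : V b → Bool | a * C.card < 4 * (((Dout C).filter (fun y => ω y = false)).card : ℝ)}) :=
        measure_mono hbig
    _ ≤ ∑ C ∈ subtreesOf (ball b ℓ),
          P {ω : V b → Bool | a * C.card < 4 * (((Dout C).filter (fun y => ω y = false)).card : ℝ)} :=
        measure_biUnion_finset_le _ _
    _ ≤ ∑ C ∈ subtreesOf (ball b ℓ), ENNReal.ofReal (Real.sqrt ε * z ^ C.card) :=
        Finset.sum_le_sum hC1
    _ = ENNReal.ofReal (∑ C ∈ subtreesOf (ball b ℓ), Real.sqrt ε * z ^ C.card) := by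
        rw [ENNReal.ofReal_sum_of_nonneg]
        intro C _
        positivity
    _ ≤ ENNReal.ofReal (Real.sqrt ε * (2 * z)) := by
        apply ENNReal.ofReal_le_ofReal
        rw [← Finset.mul_sum]
        have hsum := sum_subtrees_le z hz0 (one_add_two_mul_pow_le hz0 h4bz) ℓ
        have hς : 0 ≤ Real.sqrt ε := Real.sqrt_nonneg _
        nlinarith [hsum]
    _ = ENNReal.ofReal (Real.sqrt (1-p) * (2 * ((2:ℝ)^b * (1-p) ^ ((a:ℝ)/8)))) := rfl

/-! ### Main theorem -/

set_option maxHeartbeats 1000000 in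
/-- for every `δ > 0`, `a > 0`, `b ≥ 2` there are `p₀ < 1`, `β₀ < ∞` such that
for all `p ∈ [p₀,1)`, `β ≥ β₀`, `h ≥ -(b-1)+a` and every `ℓ ≥ 1`,
`ℙ(R^ℓ(ω) > e^{-2β}) ≤ δ`, the environment being `ω_r = +1` fixed and i.i.d. Bernoulli(p)
elsewhere. -/
theorem stmt1 (δ : ℝ) (hδ : 0 < δ) (a : ℝ) (ha : 0 < a) (b : ℕ) (hb : 2 ≤ b) :
    ∃ p₀ : ℝ, 0 ≤ p₀ ∧ p₀ < 1 ∧ ∃ β₀ : ℝ,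
      ∀ p : ℝ, p₀ ≤ p → p < 1 → ∀ β : ℝ, β₀ ≤ β →
        ∀ h : ℝ, -((b : ℝ) - 1) + a ≤ h → ∀ ℓ : ℕ, 1 ≤ ℓ →
          ∀ P : Measure (V b → Bool), IsBernoulliProductRoot b p P →
            P {ω | ENNReal.ofReal (Real.exp (-(2 * β))) < RfinE b β h ℓ ω} ≤
              ENNReal.ofReal δ := by
  have hbR : (2:ℝ) ≤ (b:ℝ) := by exact_mod_cast hb
  set L : ℝ := Real.log ((2:ℝ)^b * (8*b)) + 1 with hLdef
  set η : ℝ := Real.exp (-(8/a) * L) with hηdef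
  have hη0 : 0 < η := Real.exp_pos _
  have hmin0 : 0 < min (δ^2) η := lt_min (by positivity) hη0
  refine ⟨max 0 (1 - min (δ^2) η), le_max_left _ _, ?_, ((b:ℝ)+2)/a, ?_⟩
  · apply max_lt one_pos
    linarith
  · intro p hp₀ hp1 β hβ h hh ℓ hℓ P hP
    have hp0 : (0:ℝ) ≤ p := le_trans (le_max_left _ _) hp₀
    have hp₀' : 1 - min (δ^2) η ≤ p := le_trans (le_max_right _ _) hp₀
    have hεδ : 1 - p ≤ δ^2 := by
      have := min_le_left (δ^2) η
      linarith
    have hεη : 1 - p ≤ η := by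
      have := min_le_right (δ^2) η
      linarith
    have hε0 : (0:ℝ) < 1 - p := by linarith
    -- the small parameter z = 2^b (1-p)^{a/8}
    have hM0 : (0:ℝ) < (2:ℝ)^b * (8*b) := by positivity
    have hz_le : (2:ℝ)^b * (1-p) ^ ((a:ℝ)/8) ≤ 1/(8*(b:ℝ)) := by
      have h1 : (1-p) ^ ((a:ℝ)/8) ≤ η ^ ((a:ℝ)/8) :=
        Real.rpow_le_rpow (le_of_lt hε0) hεη (by positivity)
      have h2 : η ^ ((a:ℝ)/8) = Real.exp (-L) := by
        rw [hηdef, ← Real.exp_mul]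
        congr 1
        field_simp
      have h3 : Real.exp (-L) ≤ ((2:ℝ)^b * (8*b))⁻¹ := by
        rw [hLdef, neg_add, Real.exp_add]
        have he1 : Real.exp (-(1:ℝ)) ≤ 1 := by
          have := Real.exp_le_exp.2 (by norm_num : (-(1:ℝ)) ≤ 0)
          rwa [Real.exp_zero] at this
        have he2 : Real.exp (-Real.log ((2:ℝ)^b * (8*b))) = ((2:ℝ)^b * (8*b))⁻¹ := by
          rw [Real.exp_neg, Real.exp_log hM0]
        rw [he2]
        nlinarith [Real.exp_pos (-Real.log ((2:ℝ)^b * (8*b))), inv_nonneg.2 (le_of_lt hM0)]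
      calc (2:ℝ)^b * (1-p) ^ ((a:ℝ)/8) ≤ (2:ℝ)^b * Real.exp (-L) := by
            rw [← h2]
            exact mul_le_mul_of_nonneg_left h1 (by positivity)
        _ ≤ (2:ℝ)^b * ((2:ℝ)^b * (8*b))⁻¹ := mul_le_mul_of_nonneg_left h3 (by positivity)
        _ = 1/(8*(b:ℝ)) := by
            field_simp
    have hz0 : (0:ℝ) ≤ (2:ℝ)^b * (1-p) ^ ((a:ℝ)/8) := by positivity
    have h4bz : 4*(b:ℝ)*((2:ℝ)^b * (1-p) ^ ((a:ℝ)/8)) ≤ 1 := by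
      have hblarge : (0:ℝ) < (b:ℝ) := by linarith
      have := mul_le_mul_of_nonneg_left hz_le (by positivity : (0:ℝ) ≤ 4*(b:ℝ))
      calc 4*(b:ℝ)*((2:ℝ)^b * (1-p) ^ ((a:ℝ)/8)) ≤ 4*(b:ℝ) * (1/(8*(b:ℝ))) := this
        _ = 1/2 := by field_simp; ring
        _ ≤ 1 := by norm_num
    -- inclusion of the event in (bad obstacle pattern) ∪ (root is an obstacle)
    have hincl : {ω : V b → Bool | ENNReal.ofReal (Real.exp (-(2 * β))) < RfinE b β h ℓ ω} ⊆
        {ω : V b → Bool | ∃ C ∈ subtreesOf (ball b ℓ),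
            a * C.card < 4 * (((Dout C).filter (fun y => ω y = false)).card : ℝ)} ∪
        {ω : V b → Bool | ¬ (ω ([] : V b) = true)} := by
      intro ω hω
      by_cases hroot : ω ([] : V b) = true
      · left
        by_contra hbad
        simp only [Set.mem_setOf_eq, not_exists, not_and, not_lt] at hbad
        have hgood : ∀ C ∈ subtreesOf (ball b ℓ),
            4 * (((Dout C).filter (fun y => ω y = false)).card : ℝ) ≤ a * C.card := by
          intro C hC
          exact hbad C hC
        have hle := RfinE_le hb ha hβ hh hroot hgood
        rw [Set.mem_setOf_eq] at hω
        exact absurd hω (not_lt.2 hle)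
      · right
        exact hroot
    -- final computation
    have hsqrt : Real.sqrt (1-p) ≤ δ := by
      calc Real.sqrt (1-p) ≤ Real.sqrt (δ^2) := Real.sqrt_le_sqrt hεδ
        _ = δ := Real.sqrt_sq (le_of_lt hδ)
    have h2zle : 2 * ((2:ℝ)^b * (1-p) ^ ((a:ℝ)/8)) ≤ 1 := by
      nlinarith
    calc P {ω | ENNReal.ofReal (Real.exp (-(2 * β))) < RfinE b β h ℓ ω}
        ≤ P ({ω : V b → Bool | ∃ C ∈ subtreesOf (ball b ℓ),
              a * C.card < 4 * (((Dout C).filter (fun y => ω y = false)).card : ℝ)} ∪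
            {ω : V b → Bool | ¬ (ω ([] : V b) = true)}) := measure_mono hincl
      _ ≤ P {ω : V b → Bool | ∃ C ∈ subtreesOf (ball b ℓ),
              a * C.card < 4 * (((Dout C).filter (fun y => ω y = false)).card : ℝ)} +
            P {ω : V b → Bool | ¬ (ω ([] : V b) = true)} := measure_union_le _ _
      _ ≤ ENNReal.ofReal (Real.sqrt (1-p) *
            (2 * ((2:ℝ)^b * (1-p) ^ ((a:ℝ)/8)))) + 0 := by
          apply add_le_add
          · exact prob_bad ha hp0 hp1 hP ℓ h4bz
          · exact le_of_eq (prob_root_false hP)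
      _ ≤ ENNReal.ofReal δ := by
          rw [add_zero]
          apply ENNReal.ofReal_le_ofReal
          have hs0 : 0 ≤ Real.sqrt (1-p) := Real.sqrt_nonneg _
          nlinarith
end Paper
end

section
/- For every p > 1/2 there exist b₀ ∈ ℕ, β₀ < ∞, and c > 0 such that for every integer b ≥ b₀, every β ≥ β₀, with external field h = 0, and every integer ℓ ≥ 1: P(R^ℓ(ω) > e^{−2β}) ≤ e^{−c b}, where the environment ω is random with ω_r = +1 fixed and {ω_x}_{x ≠ r} i.i.d. with P(ω_x = +1) = p. -/
open scoped BigOperators ENNReal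
open MeasureTheory

namespace Paper

/- ======================= auxiliary development ======================= -/

namespace Stmt2Aux

open Finset

variable {b : ℕ}

/-! ### Basic tree combinatorics -/

lemma mem_wordsOfLen {n : ℕ} {x : V b} : x ∈ wordsOfLen b n ↔ x.length = n := by
  induction n generalizing x with
  | zero => simp [wordsOfLen, List.length_eq_zero_iff]
  | succ n ih =>
    simp only [wordsOfLen, Finset.mem_biUnion, Finset.mem_image, Finset.mem_univ, true_and]
    constructor
    · rintro ⟨y, hy, k, rfl⟩
      simp [ih.1 hy]
    · intro hx
      have hne : x ≠ [] := by
        intro h; subst h; simp at hx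
      refine ⟨x.dropLast, ih.2 ?_, x.getLast hne, List.dropLast_append_getLast hne⟩
      rw [List.length_dropLast, hx]; omega

lemma mem_ball {n : ℕ} {x : V b} : x ∈ ball b n ↔ x.length ≤ n := by
  simp only [ball, Finset.mem_biUnion, Finset.mem_range, mem_wordsOfLen]
  constructor
  · rintro ⟨k, hk, rfl⟩; omega
  · intro h; exact ⟨x.length, by omega, rfl⟩

/-- prefix-closed finsets of vertices containing the root -/
def PCpred (b : ℕ) (C : Finset (V b)) : Prop := ([] : V b) ∈ C ∧ ∀ x ∈ C, x.dropLast ∈ C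

instance : DecidablePred (PCpred b) := fun _ => inferInstanceAs (Decidable (_ ∧ _))

lemma take_mem_of_PC {C : Finset (V b)} (hC : PCpred b C) {x : V b} (hx : x ∈ C) :
    ∀ k, x.take k ∈ C := by
  have key : ∀ j k : ℕ, k + j = x.length → x.take k ∈ C := by
    intro j
    induction j with
    | zero =>
      intro k hk
      have : k = x.length := by omega
      subst this; rwa [List.take_length]
    | succ j ih =>
      intro k hk
      have h1 : x.take (k + 1) ∈ C := ih (k + 1) (by omega)
      have h2 : (x.take (k + 1)).dropLast = x.take k := by
        rw [List.dropLast_eq_take, List.take_take, List.length_take]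
        congr 1
        omega
      have := hC.2 _ h1
      rwa [h2] at this
  intro k
  rcases le_or_gt x.length k with h | h
  · rwa [List.take_of_length_le h]
  · exact key (x.length - k) k (by omega)

/-- the `b` children of a vertex -/
def child (b : ℕ) (x : V b) : Finset (V b) := Finset.univ.image fun k : Fin b => x ++ [k]

/-- the children of elements of `C` that lie outside `C` -/
def chOut (b : ℕ) (C : Finset (V b)) : Finset (V b) := (C.biUnion (child b)) \ C

lemma mem_chOut {C : Finset (V b)} {z : V b} :
    z ∈ chOut b C ↔ z ≠ [] ∧ z.dropLast ∈ C ∧ z ∉ C := by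
  simp only [chOut, Finset.mem_sdiff, Finset.mem_biUnion, child, Finset.mem_image,
    Finset.mem_univ, true_and]
  constructor
  · rintro ⟨⟨x, hx, k, rfl⟩, hz⟩
    refine ⟨by simp, ?_, hz⟩
    rwa [List.dropLast_concat]
  · rintro ⟨hne, hd, hz⟩
    exact ⟨⟨z.dropLast, hd, z.getLast hne, List.dropLast_append_getLast hne⟩, hz⟩

/-- the sum of boundary spins of a cluster -/
noncomputable def eC (b : ℕ) (C : Finset (V b)) (ω : V b → Bool) : ℝ :=
  ∑ z ∈ chOut b C, spin (ω z)

/-- all prefix-closed clusters inside the ball of radius `ℓ` -/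
def PCs (b ℓ : ℕ) : Finset (Finset (V b)) := (ball b ℓ).powerset.filter (PCpred b)

/-- all prefix-closed clusters inside the free region -/
def CCol (b ℓ : ℕ) (ω : V b → Bool) : Finset (Finset (V b)) :=
  (region b ℓ ω).powerset.filter (PCpred b)

/-- the Peierls majorant -/
noncomputable def Sstar (b : ℕ) (β₀ : ℝ) (ℓ : ℕ) (ω : V b → Bool) : ℝ :=
  ∑ C ∈ CCol b ℓ ω, Real.exp (2 * β₀ * (1 - eC b C ω))

lemma mem_region_iff {ℓ : ℕ} {ω : V b → Bool} {x : V b} :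
    x ∈ region b ℓ ω ↔ x.length ≤ ℓ ∧ ∀ k, ω (x.take k) = true := by
  simp only [region, Finset.mem_filter, mem_ball, inT, List.all_eq_true, List.mem_range]
  constructor
  · rintro ⟨h1, h2⟩
    refine ⟨h1, fun k => ?_⟩
    rcases le_or_gt k x.length with h | h
    · exact h2 k (by omega)
    · rw [List.take_of_length_le (le_of_lt h)]
      have := h2 x.length (by omega)
      rwa [List.take_length] at this
  · rintro ⟨h1, h2⟩
    exact ⟨h1, fun k _ => h2 k⟩

lemma region_free {ℓ : ℕ} {ω : V b → Bool} {x : V b} (hx : x ∈ region b ℓ ω) :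
    ω x = true := by
  have := (mem_region_iff.1 hx).2 x.length
  rwa [List.take_length] at this

lemma root_mem_region {ℓ : ℕ} {ω : V b → Bool} (hroot : ω [] = true) :
    ([] : V b) ∈ region b ℓ ω := by
  rw [mem_region_iff]
  exact ⟨by simp, fun k => by simpa using hroot⟩

lemma region_take {ℓ : ℕ} {ω : V b → Bool} {x : V b} (hx : x ∈ region b ℓ ω) (k : ℕ) :
    x.take k ∈ region b ℓ ω := by
  rw [mem_region_iff] at hx ⊢
  refine ⟨le_trans (by simpa using List.length_take_le k x) hx.1, fun j => ?_⟩
  rw [List.take_take]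
  exact hx.2 _

lemma card_chOut {C : Finset (V b)} (hC : PCpred b C) :
    (chOut b C).card = b * C.card - (C.card - 1) := by
  have hdisj : ∀ x ∈ C, ∀ y ∈ C, x ≠ y → Disjoint (child b x) (child b y) := by
    intro x _ y _ hxy
    rw [Finset.disjoint_left]
    rintro z hz hz'
    simp only [child, Finset.mem_image, Finset.mem_univ, true_and] at hz hz'
    obtain ⟨k, rfl⟩ := hz
    obtain ⟨k', hk'⟩ := hz'
    apply hxy
    have := congrArg List.dropLast hk'
    rw [List.dropLast_concat, List.dropLast_concat] at this
    exact this.symm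
  have hcard : (C.biUnion (child b)).card = b * C.card := by
    rw [Finset.card_biUnion hdisj]
    have : ∀ x : V b, (child b x).card = b := by
      intro x
      rw [child, Finset.card_image_of_injective _ (fun k k' h => by simpa using h),
        Finset.card_univ, Fintype.card_fin]
    simp [this, mul_comm]
  have hinter : C.biUnion (child b) ∩ C = C.erase [] := by
    ext z
    simp only [Finset.mem_inter, Finset.mem_biUnion, child, Finset.mem_image, Finset.mem_univ,
      true_and, Finset.mem_erase]
    constructor
    · rintro ⟨⟨x, hx, k, rfl⟩, hz⟩
      exact ⟨by simp, hz⟩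
    · rintro ⟨hne, hz⟩
      exact ⟨⟨z.dropLast, hC.2 z hz, z.getLast hne, List.dropLast_append_getLast hne⟩, hz⟩
  have : chOut b C = C.biUnion (child b) \ (C.biUnion (child b) ∩ C) := by
    rw [chOut]; ext z; simp only [Finset.mem_sdiff, Finset.mem_inter]; tauto
  rw [this, Finset.card_sdiff_of_subset (Finset.inter_subset_left), hcard, hinter,
    Finset.card_erase_of_mem hC.1]

lemma inT_iff {ω' : V b → Bool} {x : V b} :
    inT b ω' x = true ↔ ∀ k, k < x.length + 1 → ω' (x.take k) = true := by
  simp [inT, List.all_eq_true, List.mem_range]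

/-! ### The energy flip identity -/

lemma energy_flip {β : ℝ} {ℓ : ℕ} {ω : V b → Bool} {C : Finset (V b)} {c : V b → Bool}
    (hC : PCpred b C) (hCA : C ⊆ region b ℓ ω)
    (hfalse : ∀ x ∈ C, c x = false)
    (hout : ∀ z ∈ chOut b C, c z = ω z) :
    energy b β 0 (region b ℓ ω) [] (fun v => if v ∈ C then true else c v)
      = energy b β 0 (region b ℓ ω) [] c + 2 * β * eC b C ω := by
  classical
  set A := region b ℓ ω with hA
  set cnew := fun v => if v ∈ C then true else c v with hcnew
  set Edg := (A ∪ bdry b A).filter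
      (fun y => y ≠ ([] : V b) ∧ y ≠ ([] : V b) ∧ y.dropLast ∈ A ∪ bdry b A) with hEdg
  have hchsub : chOut b C ⊆ Edg := by
    intro z hz
    rw [mem_chOut] at hz
    obtain ⟨hne, hd, hznC⟩ := hz
    have hdA : z.dropLast ∈ A := hCA hd
    have hzW : z ∈ A ∪ bdry b A := by
      by_cases h : z ∈ A
      · exact Finset.mem_union_left _ h
      · refine Finset.mem_union_right _ ?_
        rw [bdry, Finset.mem_sdiff]
        refine ⟨Finset.mem_biUnion.2 ⟨z.dropLast, hdA, ?_⟩, h⟩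
        rw [nbrs]
        refine Finset.mem_union_left _ ?_
        simp only [Finset.mem_image, Finset.mem_univ, true_and]
        exact ⟨z.getLast hne, List.dropLast_append_getLast hne⟩
    exact Finset.mem_filter.2 ⟨hzW, hne, hne, Finset.mem_union_left _ hdA⟩
  have key : ∀ y ∈ Edg, spin (cnew y.dropLast) * spin (cnew y)
      = spin (c y.dropLast) * spin (c y) + (if y ∈ chOut b C then 2 * spin (ω y) else 0) := by
    intro y hy
    rw [hEdg, Finset.mem_filter] at hy
    obtain ⟨hyW, hyne, -, hydW⟩ := hy
    by_cases hyC : y ∈ C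
    · have hpC : y.dropLast ∈ C := hC.2 y hyC
      have hynotout : y ∉ chOut b C := fun h => (mem_chOut.1 h).2.2 hyC
      simp only [hcnew, if_pos hyC, if_pos hpC, if_neg hynotout,
        hfalse y hyC, hfalse _ hpC, spin]
      norm_num
    · by_cases hpC : y.dropLast ∈ C
      · have hyout : y ∈ chOut b C := mem_chOut.2 ⟨hyne, hpC, hyC⟩
        have hcy : c y = ω y := hout y hyout
        simp only [hcnew, if_pos hpC, if_neg hyC, if_pos hyout, hfalse _ hpC, hcy, spin]
        cases ω y <;> norm_num
      · have hynotout : y ∉ chOut b C := fun h => hpC (mem_chOut.1 h).2.1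
        simp only [hcnew, if_neg hyC, if_neg hpC, if_neg hynotout, add_zero]
  have hsum : (∑ y ∈ Edg, spin (cnew y.dropLast) * spin (cnew y))
      = (∑ y ∈ Edg, spin (c y.dropLast) * spin (c y)) + 2 * eC b C ω := by
    rw [Finset.sum_congr rfl key, Finset.sum_add_distrib]
    congr 1
    rw [Finset.sum_ite_mem, Finset.inter_eq_right.2 hchsub, eC, Finset.mul_sum]
  show β * ((∑ y ∈ Edg, spin (cnew y.dropLast) * spin (cnew y)) + 0 * ∑ x ∈ A, spin (cnew x))
      = β * ((∑ y ∈ Edg, spin (c y.dropLast) * spin (c y)) + 0 * ∑ x ∈ A, spin (c x))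
        + 2 * β * eC b C ω
  rw [hsum]
  ring

/-! ### The Peierls bound -/

lemma peierls {β : ℝ} {ℓ : ℕ} {ω : V b → Bool} (hroot : ω [] = true) :
    (∑ σ : {x // x ∈ region b ℓ ω} → Bool,
        Real.exp (energy b β 0 (region b ℓ ω) [] (glue b (region b ℓ ω) ω σ)) *
          (if glue b (region b ℓ ω) ω σ [] = false then 1 else 0))
      ≤ (∑ C ∈ CCol b ℓ ω, Real.exp (-(2 * β) * eC b C ω)) *
        (∑ σ : {x // x ∈ region b ℓ ω} → Bool,
          Real.exp (energy b β 0 (region b ℓ ω) [] (glue b (region b ℓ ω) ω σ)) *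
            (if glue b (region b ℓ ω) ω σ [] = true then 1 else 0)) := by
  set A := region b ℓ ω with hA
  have hrootA : ([] : V b) ∈ A := by
    rw [hA, mem_region_iff]
    exact ⟨by simp, fun k => by simpa using hroot⟩
  have conv : ∀ s : Bool, (∑ σ : {x // x ∈ A} → Bool,
        Real.exp (energy b β 0 A [] (glue b A ω σ)) * (if glue b A ω σ [] = s then 1 else 0))
      = ∑ σ ∈ Finset.univ.filter (fun σ : {x // x ∈ A} → Bool => glue b A ω σ [] = s),
          Real.exp (energy b β 0 A [] (glue b A ω σ)) := by
    intro s
    rw [Finset.sum_filter]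
    refine Finset.sum_congr rfl fun σ _ => ?_
    by_cases h : glue b A ω σ [] = s <;> simp [h]
  rw [conv false, conv true]
  set Den := ∑ σ ∈ Finset.univ.filter (fun σ : {x // x ∈ A} → Bool => glue b A ω σ [] = true),
      Real.exp (energy b β 0 A [] (glue b A ω σ)) with hDen
  set comp : ({x // x ∈ A} → Bool) → Finset (V b) := fun σ =>
    A.filter (fun x => inT b (fun v => !(glue b A ω σ v)) x = true) with hcomp
  have compmem : ∀ (σ : {x // x ∈ A} → Bool) (x : V b), x ∈ comp σ ↔
      x ∈ A ∧ ∀ k, k < x.length + 1 → glue b A ω σ (x.take k) = false := by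
    intro σ x
    rw [hcomp]
    simp only [Finset.mem_filter, inT_iff, Bool.not_eq_true']
  set s0 := Finset.univ.filter (fun σ : {x // x ∈ A} → Bool => glue b A ω σ [] = false) with hs0
  have hmaps : ∀ σ ∈ s0, comp σ ∈ CCol b ℓ ω := by
    intro σ hσ
    rw [hs0, Finset.mem_filter] at hσ
    rw [CCol, Finset.mem_filter, Finset.mem_powerset]
    have hsub : comp σ ⊆ A := by
      intro x hx
      exact ((compmem σ x).1 hx).1
    refine ⟨hsub, ?_, ?_⟩
    · refine (compmem σ []).2 ⟨hrootA, fun k _ => ?_⟩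
      simpa using hσ.2
    · intro x hx
      rw [compmem] at hx ⊢
      obtain ⟨hxA, hxf⟩ := hx
      refine ⟨?_, fun k hk => ?_⟩
      · rw [List.dropLast_eq_take]
        exact region_take hxA _
      · rw [List.length_dropLast] at hk
        rw [List.dropLast_eq_take, List.take_take, min_eq_left (by omega)]
        exact hxf k (by omega)
  have compfalse : ∀ (σ : {x // x ∈ A} → Bool), ∀ x ∈ comp σ, glue b A ω σ x = false := by
    intro σ x hx
    have := ((compmem σ x).1 hx).2 x.length (by omega)
    rwa [List.take_length] at this
  have compmax : ∀ (σ : {x // x ∈ A} → Bool), ∀ z, z ∈ chOut b (comp σ) → z ∈ A →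
      glue b A ω σ z = true := by
    intro σ z hz hzA
    obtain ⟨hne, hd, hznC⟩ := mem_chOut.1 hz
    by_contra h
    apply hznC
    rw [compmem] at hd ⊢
    refine ⟨hzA, fun k hk => ?_⟩
    rcases Nat.lt_or_ge k z.length with hkl | hkl
    · have : z.take k = z.dropLast.take k := by
        rw [List.dropLast_eq_take, List.take_take, min_eq_left (by omega)]
      rw [this]
      exact hd.2 k (by rw [List.length_dropLast]; omega)
    · rw [List.take_of_length_le hkl]
      exact Bool.not_eq_true _ ▸ (Bool.of_not_eq_true h)
  rw [← Finset.sum_fiberwise_of_maps_to hmaps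
    (fun σ => Real.exp (energy b β 0 A [] (glue b A ω σ)))]
  rw [Finset.sum_mul]
  refine Finset.sum_le_sum fun C hCmem => ?_
  have hCpow := Finset.mem_filter.1 hCmem
  have hCA : C ⊆ A := Finset.mem_powerset.1 (Finset.mem_filter.1 (by rwa [CCol] at hCmem)).1
  have hCpc : PCpred b C := (Finset.mem_filter.1 (by rwa [CCol] at hCmem)).2
  set Φ : ({x // x ∈ A} → Bool) → ({x // x ∈ A} → Bool) :=
    fun σ x => if (x : V b) ∈ C then true else σ x with hΦ
  have hglueΦ : ∀ σ, comp σ = C →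
      glue b A ω (Φ σ) = fun v => if v ∈ C then true else glue b A ω σ v := by
    intro σ hσC
    funext v
    by_cases hv : v ∈ A
    · show glue b A ω (Φ σ) v = _
      rw [glue, dif_pos hv]
      by_cases hvC : v ∈ C
      · simp [hΦ, hvC, glue]
      · simp [hΦ, hvC, glue, dif_pos hv]
    · have hvC : v ∉ C := fun h => hv (hCA h)
      show glue b A ω (Φ σ) v = _
      rw [glue, dif_neg hv, if_neg hvC, glue, dif_neg hv]
  have henergy : ∀ σ ∈ s0.filter (fun σ => comp σ = C),
      Real.exp (energy b β 0 A [] (glue b A ω σ))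
        = Real.exp (-(2 * β) * eC b C ω) * Real.exp (energy b β 0 A [] (glue b A ω (Φ σ))) := by
    intro σ hσ
    rw [Finset.mem_filter] at hσ
    obtain ⟨hσ0, hσC⟩ := hσ
    have hflip : energy b β 0 A [] (fun v => if v ∈ C then true else glue b A ω σ v)
        = energy b β 0 A [] (glue b A ω σ) + 2 * β * eC b C ω := by
      refine energy_flip hCpc hCA ?_ ?_
      · intro x hx
        rw [← hσC] at hx
        exact compfalse σ x hx
      · intro z hz
        by_cases hzA : z ∈ A
        · rw [compmax σ z (by rwa [hσC]) hzA, region_free hzA]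
        · rw [glue, dif_neg hzA]
    rw [hglueΦ σ hσC, hflip, ← Real.exp_add]
    congr 1
    ring
  rw [Finset.sum_congr rfl henergy, ← Finset.mul_sum]
  refine mul_le_mul_of_nonneg_left ?_ (Real.exp_nonneg _)
  have hinj : Set.InjOn Φ (s0.filter (fun σ => comp σ = C)) := by
    intro σ₁ h₁ σ₂ h₂ heq
    rw [Finset.coe_filter, Set.mem_setOf_eq] at h₁ h₂
    funext x
    by_cases hx : (x : V b) ∈ C
    · have e₁ : glue b A ω σ₁ (x : V b) = false := by
        rw [← h₁.2] at hx
        exact compfalse σ₁ _ hx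
      have e₂ : glue b A ω σ₂ (x : V b) = false := by
        rw [← h₂.2] at hx
        exact compfalse σ₂ _ hx
      rw [glue, dif_pos x.2] at e₁ e₂
      simp only [Subtype.coe_eta] at e₁ e₂
      rw [e₁, e₂]
    · have := congrFun heq x
      simp only [hΦ, if_neg hx] at this
      exact this
  rw [← Finset.sum_image (f := fun τ : {x // x ∈ A} → Bool =>
      Real.exp (energy b β 0 A [] (glue b A ω τ))) (fun σ h σ' h' hh => hinj h h' hh)]
  refine Finset.sum_le_sum_of_subset_of_nonneg ?_ (fun τ _ _ => Real.exp_nonneg _)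
  intro τ hτ
  rw [Finset.mem_image] at hτ
  obtain ⟨σ, hσ, rfl⟩ := hτ
  rw [Finset.mem_filter]
  refine ⟨Finset.mem_univ _, ?_⟩
  rw [glue, dif_pos hrootA]
  simp [hΦ, hCpc.1]

/-! ### Deterministic bound on `R` -/

lemma det_bound {β₀ β : ℝ} (hβ₀ : 0 < β₀) (hβ : β₀ ≤ β) {ℓ : ℕ} {ω : V b → Bool}
    (hroot : ω [] = true) (hS : Sstar b β₀ ℓ ω ≤ 1 / 2) :
    RfinE b β 0 ℓ ω ≤ ENNReal.ofReal (Real.exp (-(2 * β))) := by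
  rw [RfinE, if_pos hroot]
  apply ENNReal.ofReal_le_ofReal
  set A := region b ℓ ω with hA
  have hrootA : ([] : V b) ∈ A := root_mem_region hroot
  simp only [gibbsExp]
  set Z := ∑ σ : {x // x ∈ A} → Bool, Real.exp (energy b β 0 A [] (glue b A ω σ)) with hZ
  set Num := ∑ σ : {x // x ∈ A} → Bool, Real.exp (energy b β 0 A [] (glue b A ω σ)) *
      (if glue b A ω σ [] = false then 1 else 0) with hNum
  set Den := ∑ σ : {x // x ∈ A} → Bool, Real.exp (energy b β 0 A [] (glue b A ω σ)) *
      (if glue b A ω σ [] = true then 1 else 0) with hDen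
  have hZpos : 0 < Z := by
    rw [hZ]
    exact Finset.sum_pos (fun _ _ => Real.exp_pos _) Finset.univ_nonempty
  have htermnn : ∀ (s : Bool) (σ : {x // x ∈ A} → Bool),
      0 ≤ Real.exp (energy b β 0 A [] (glue b A ω σ)) *
        (if glue b A ω σ [] = s then 1 else 0) := by
    intro s σ
    by_cases h : glue b A ω σ [] = s <;> simp [h, Real.exp_nonneg, le_of_lt (Real.exp_pos _)]
  have hDenpos : 0 < Den := by
    rw [hDen]
    refine Finset.sum_pos' (fun σ _ => htermnn true σ) ⟨fun _ => true, Finset.mem_univ _, ?_⟩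
    have : glue b A ω (fun _ => true) [] = true := by rw [glue, dif_pos hrootA]
    rw [this]
    simp [Real.exp_pos]
  have hNumnn : 0 ≤ Num := Finset.sum_nonneg (fun σ _ => htermnn false σ)
  have hfrac : Num / Z / (Den / Z) = Num / Den := by
    field_simp
  rw [hfrac, div_le_iff₀ hDenpos]
  have hpei : Num ≤ (∑ C ∈ CCol b ℓ ω, Real.exp (-(2 * β) * eC b C ω)) * Den := by
    rw [hNum, hDen]
    exact peierls hroot
  have hterm : ∀ C ∈ CCol b ℓ ω, Real.exp (-(2 * β) * eC b C ω)
      ≤ Real.exp (-(2 * β)) * Real.exp (2 * β₀ * (1 - eC b C ω)) := by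
    intro C hC
    have h1 : Real.exp (2 * β₀ * (1 - eC b C ω)) ≤ 1 / 2 := by
      refine le_trans (Finset.single_le_sum (f := fun C => Real.exp (2 * β₀ * (1 - eC b C ω)))
        (fun _ _ => Real.exp_nonneg _) hC) hS
    have h2 : 2 * β₀ * (1 - eC b C ω) < 0 := by
      rw [← Real.exp_lt_one_iff]
      linarith
    have h3 : 1 - eC b C ω < 0 := by nlinarith
    rw [← Real.exp_add]
    apply Real.exp_le_exp.2
    nlinarith
  have hSb : (∑ C ∈ CCol b ℓ ω, Real.exp (-(2 * β) * eC b C ω))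
      ≤ Real.exp (-(2 * β)) * Sstar b β₀ ℓ ω := by
    rw [Sstar, Finset.mul_sum]
    exact Finset.sum_le_sum hterm
  calc Num ≤ (∑ C ∈ CCol b ℓ ω, Real.exp (-(2 * β) * eC b C ω)) * Den := hpei
  _ ≤ (Real.exp (-(2 * β)) * Sstar b β₀ ℓ ω) * Den :=
      mul_le_mul_of_nonneg_right hSb (le_of_lt hDenpos)
  _ ≤ Real.exp (-(2 * β)) * Den := by
      have hSnn : 0 ≤ Sstar b β₀ ℓ ω := Finset.sum_nonneg (fun _ _ => Real.exp_nonneg _)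
      have h1 : Real.exp (-(2 * β)) * Sstar b β₀ ℓ ω ≤ Real.exp (-(2 * β)) := by
        nlinarith [Real.exp_pos (-(2 * β))]
      exact mul_le_mul_of_nonneg_right h1 (le_of_lt hDenpos)

/-! ### Locality of `Sstar` -/

lemma region_congr {ℓ : ℕ} {ω ω' : V b → Bool} (h : ∀ x ∈ ball b (ℓ + 1), ω x = ω' x) :
    region b ℓ ω = region b ℓ ω' := by
  ext x
  rw [mem_region_iff, mem_region_iff]
  refine and_congr_right fun hlen => forall_congr' fun k => ?_
  have hk : (x.take k).length ≤ ℓ + 1 := by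
    rw [List.length_take]
    omega
  rw [h _ (mem_ball.2 hk)]

lemma Sstar_congr {β₀ : ℝ} {ℓ : ℕ} {ω ω' : V b → Bool}
    (h : ∀ x ∈ ball b (ℓ + 1), ω x = ω' x) :
    Sstar b β₀ ℓ ω = Sstar b β₀ ℓ ω' := by
  have hreg := region_congr h
  rw [Sstar, Sstar, CCol, CCol, hreg]
  refine Finset.sum_congr rfl fun C hC => ?_
  have hCsub : C ⊆ region b ℓ ω' := Finset.mem_powerset.1 (Finset.mem_filter.1 hC).1
  have heC : eC b C ω = eC b C ω' := by
    rw [eC, eC]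
    refine Finset.sum_congr rfl fun z hz => ?_
    obtain ⟨hne, hd, -⟩ := mem_chOut.1 hz
    have hdball : z.dropLast.length ≤ ℓ := (mem_region_iff.1 (hCsub hd)).1
    have hlen : z.length ≤ ℓ + 1 := by
      have h2 : z.dropLast.length = z.length - 1 := List.length_dropLast
      have h3 : 0 < z.length := List.length_pos_iff.2 hne
      omega
    rw [h _ (mem_ball.2 hlen)]
  rw [heC]

/-! ### Clusters and children inside the big ball -/

def Fe (b ℓ : ℕ) : Finset (V b) := (ball b (ℓ + 1)).erase []

noncomputable def extF (b ℓ : ℕ) (g : {x // x ∈ Fe b ℓ} → Bool) : V b → Bool :=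
  fun v => if hv : v ∈ Fe b ℓ then g ⟨v, hv⟩ else true

lemma extF_root (g : {x // x ∈ Fe b ℓ} → Bool) : extF b ℓ g [] = true := by
  rw [extF, dif_neg]
  simp [Fe]

/-! ### Counting clusters: sum of `w^|C|` -/

lemma pow_one_add_le (x : ℝ) (hx : 0 ≤ x) : ∀ n : ℕ, 2 * n * x ≤ 1 → (1 + x) ^ n ≤ 1 + 2 * n * x := by
  intro n
  induction n with
  | zero => simp
  | succ n ih =>
    intro h
    have hn : 2 * (n : ℝ) * x ≤ 1 := by
      push_cast at h
      nlinarith [Nat.cast_nonneg (α := ℝ) n]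
    have h1 : (1 + x) ^ n ≤ 1 + 2 * n * x := ih hn
    have h2 : (0 : ℝ) ≤ (1 + x) ^ n := pow_nonneg (by linarith) n
    calc (1 + x) ^ (n + 1) = (1 + x) ^ n * (1 + x) := by ring
    _ ≤ (1 + 2 * n * x) * (1 + x) := by nlinarith
    _ ≤ 1 + 2 * (n + 1 : ℕ) * x := by push_cast; nlinarith


lemma PCs_zero : PCs b 0 = {({([] : V b)} : Finset (V b))} := by
  ext C
  simp only [PCs, Finset.mem_filter, Finset.mem_powerset, Finset.mem_singleton]
  have hball : ball b 0 = {([] : V b)} := by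
    ext x
    simp [mem_ball, List.length_eq_zero_iff]
  constructor
  · rintro ⟨hsub, hpc⟩
    apply Finset.Subset.antisymm
    · rwa [← hball]
    · simpa using hpc.1
  · rintro rfl
    refine ⟨by rw [hball], by simp, fun x hx => ?_⟩
    simp only [Finset.mem_singleton] at hx
    subst hx
    simp

/-- decomposition of a cluster into the clusters hanging off the root -/
def theta (C : Finset (V b)) : Fin b → Finset (V b) :=
  fun j => (C.filter (fun x => x.take 1 = [j])).image List.tail

lemma take_one_eq {x : V b} {j : Fin b} (h : x.take 1 = [j]) : x = j :: x.tail := by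
  cases x with
  | nil => simp at h
  | cons a t =>
    have : a = j := by simpa using h
    subst this
    rfl

lemma theta_recon {C : Finset (V b)} (hroot : ([] : V b) ∈ C) :
    C = insert ([] : V b) (Finset.univ.biUnion fun j => (theta C j).image (List.cons j)) := by
  ext y
  simp only [Finset.mem_insert, Finset.mem_biUnion, Finset.mem_image, Finset.mem_univ, true_and,
    theta, Finset.mem_filter]
  constructor
  · intro hy
    cases y with
    | nil => exact Or.inl rfl
    | cons a t =>
      exact Or.inr ⟨a, t, ⟨a :: t, ⟨hy, by simp⟩, rfl⟩, rfl⟩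
  · rintro (rfl | ⟨j, t, ⟨x, ⟨hx, hhx⟩, rfl⟩, rfl⟩)
    · exact hroot
    · rwa [← take_one_eq hhx]

lemma theta_card {C : Finset (V b)} (hroot : ([] : V b) ∈ C) :
    C.card = 1 + ∑ j : Fin b, (theta C j).card := by
  have him : ∀ j : Fin b, (theta C j).card
      = (C.filter (fun x => x.take 1 = [j])).card := by
    intro j
    refine Finset.card_image_of_injOn ?_
    intro x hx y hy hxy
    simp only [Finset.coe_filter, Set.mem_setOf_eq] at hx hy
    rw [take_one_eq hx.2, take_one_eq hy.2, hxy]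
  have hbu : (Finset.univ : Finset (Fin b)).biUnion
      (fun j => C.filter (fun x => x.take 1 = [j])) = C.erase [] := by
    ext z
    simp only [Finset.mem_biUnion, Finset.mem_filter, Finset.mem_univ, true_and,
      Finset.mem_erase]
    constructor
    · rintro ⟨j, hz, htk⟩
      refine ⟨?_, hz⟩
      intro h
      rw [h] at htk
      simp at htk
    · rintro ⟨hnz, hz⟩
      cases z with
      | nil => exact absurd rfl hnz
      | cons a t => exact ⟨a, hz, by simp⟩
  have hdisj : ∀ j ∈ (Finset.univ : Finset (Fin b)), ∀ j' ∈ (Finset.univ : Finset (Fin b)),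
      j ≠ j' → Disjoint (C.filter (fun x => x.take 1 = [j]))
        (C.filter (fun x => x.take 1 = [j'])) := by
    intro j _ j' _ hjj'
    rw [Finset.disjoint_left]
    intro x hx hx'
    simp only [Finset.mem_filter] at hx hx'
    apply hjj'
    have := hx.2.symm.trans hx'.2
    simpa using this
  have := Finset.card_biUnion hdisj
  rw [hbu] at this
  rw [Finset.sum_congr rfl (fun j _ => him j), ← this, Finset.card_erase_of_mem hroot]
  have hpos : 0 < C.card := Finset.card_pos.2 ⟨[], hroot⟩
  omega

lemma theta_mem {ℓ : ℕ} {C : Finset (V b)} (hC : C ∈ PCs b (ℓ + 1)) (j : Fin b) :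
    theta C j ∈ insert (∅ : Finset (V b)) (PCs b ℓ) := by
  rw [PCs, Finset.mem_filter, Finset.mem_powerset] at hC
  obtain ⟨hsub, hpc⟩ := hC
  by_cases hemp : theta C j = ∅
  · rw [hemp]; exact Finset.mem_insert_self _ _
  refine Finset.mem_insert_of_mem ?_
  rw [PCs, Finset.mem_filter, Finset.mem_powerset]
  have hmemC : ∀ t ∈ theta C j, (j :: t) ∈ C := by
    intro t ht
    rw [theta, Finset.mem_image] at ht
    obtain ⟨x, hx, rfl⟩ := ht
    rw [Finset.mem_filter] at hx
    rw [← take_one_eq hx.2]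
    exact hx.1
  refine ⟨?_, ?_, ?_⟩
  · intro t ht
    have := mem_ball.1 (hsub (hmemC t ht))
    rw [mem_ball]
    simp only [List.length_cons] at this
    omega
  · obtain ⟨t0, ht0⟩ := Finset.nonempty_iff_ne_empty.2 hemp
    have h1 : (j :: t0) ∈ C := hmemC t0 ht0
    have h2 : [j] ∈ C := by
      have := take_mem_of_PC hpc h1 1
      simpa using this
    rw [theta, Finset.mem_image]
    exact ⟨[j], Finset.mem_filter.2 ⟨h2, by simp⟩, rfl⟩
  · intro t ht
    have hjt : (j :: t) ∈ C := hmemC t ht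
    cases t with
    | nil => simpa using ht
    | cons s ts =>
      have h1 : (j :: s :: ts).dropLast ∈ C := hpc.2 _ hjt
      rw [List.dropLast_cons₂] at h1
      rw [theta, Finset.mem_image]
      exact ⟨j :: (s :: ts).dropLast, Finset.mem_filter.2 ⟨h1, by simp⟩, rfl⟩

lemma sum_pow_card_le {w : ℝ} (hw : 0 ≤ w) (hb : (1 + 2 * w) ^ b ≤ 2) (ℓ : ℕ) :
    ∑ C ∈ PCs b ℓ, w ^ C.card ≤ 2 * w := by
  induction ℓ with
  | zero =>
    rw [PCs_zero]
    simp only [Finset.sum_singleton, Finset.card_singleton, pow_one]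
    linarith
  | succ ℓ ih =>
    have hroot : ∀ C ∈ PCs b (ℓ + 1), ([] : V b) ∈ C := by
      intro C hC
      exact ((Finset.mem_filter.1 hC).2).1
    have step1 : ∑ C ∈ PCs b (ℓ + 1), w ^ C.card
        = ∑ C ∈ PCs b (ℓ + 1), w * ∏ j : Fin b, w ^ (theta C j).card := by
      refine Finset.sum_congr rfl fun C hC => ?_
      rw [Finset.prod_pow_eq_pow_sum, theta_card (hroot C hC), pow_add, pow_one]
    have hinj : ∀ C ∈ PCs b (ℓ + 1), ∀ C' ∈ PCs b (ℓ + 1), theta C = theta C' → C = C' := by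
      intro C hC C' hC' hth
      rw [theta_recon (hroot C hC), theta_recon (hroot C' hC'), hth]
    have step2 : ∑ C ∈ PCs b (ℓ + 1), w * ∏ j : Fin b, w ^ (theta C j).card
        = ∑ f ∈ (PCs b (ℓ + 1)).image theta,
            w * ∏ j : Fin b, w ^ (f j).card := by
      rw [Finset.sum_image hinj]
    have step3 : ∑ f ∈ (PCs b (ℓ + 1)).image theta, w * ∏ j : Fin b, w ^ (f j).card
        ≤ ∑ f ∈ Fintype.piFinset (fun _ : Fin b => insert (∅ : Finset (V b)) (PCs b ℓ)),
            w * ∏ j : Fin b, w ^ (f j).card := by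
      refine Finset.sum_le_sum_of_subset_of_nonneg ?_ (fun f _ _ => ?_)
      · intro f hf
        rw [Finset.mem_image] at hf
        obtain ⟨C, hC, rfl⟩ := hf
        rw [Fintype.mem_piFinset]
        exact fun j => theta_mem hC j
      · exact mul_nonneg hw (Finset.prod_nonneg fun j _ => pow_nonneg hw _)
    have step4 : ∑ f ∈ Fintype.piFinset (fun _ : Fin b => insert (∅ : Finset (V b)) (PCs b ℓ)),
          w * ∏ j : Fin b, w ^ (f j).card
        = w * (∑ D ∈ insert (∅ : Finset (V b)) (PCs b ℓ), w ^ D.card) ^ b := by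
      rw [← Finset.mul_sum]
      congr 1
      rw [← Finset.prod_univ_sum (fun _ : Fin b => insert (∅ : Finset (V b)) (PCs b ℓ))
        (fun _ D => w ^ D.card)]
      simp [Finset.prod_const, Finset.card_univ]
    have hne : (∅ : Finset (V b)) ∉ PCs b ℓ := by
      intro h
      have := ((Finset.mem_filter.1 h).2).1
      simp at this
    have hDsum : ∑ D ∈ insert (∅ : Finset (V b)) (PCs b ℓ), w ^ D.card
        = 1 + ∑ C ∈ PCs b ℓ, w ^ C.card := by
      rw [Finset.sum_insert hne]
      simp
    have hSB : 0 ≤ ∑ C ∈ PCs b ℓ, w ^ C.card :=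
      Finset.sum_nonneg fun C _ => pow_nonneg hw _
    calc ∑ C ∈ PCs b (ℓ + 1), w ^ C.card
        ≤ w * (∑ D ∈ insert (∅ : Finset (V b)) (PCs b ℓ), w ^ D.card) ^ b := by
          rw [step1, step2, ← step4]
          exact step3
    _ ≤ w * (1 + 2 * w) ^ b := by
          refine mul_le_mul_of_nonneg_left ?_ hw
          rw [hDsum]
          exact pow_le_pow_left₀ (by linarith) (by linarith) b
    _ ≤ 2 * w := by nlinarith

/-! ### The expectation computation -/

noncomputable def wr (p : ℝ) (s : Bool) : ℝ := if s then p else 1 - p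

noncomputable def q0 (p β₀ : ℝ) : ℝ := p * Real.exp (-(2 * β₀)) + (1 - p) * Real.exp (2 * β₀)

lemma extF_mem (g : {x // x ∈ Fe b ℓ} → Bool) {x : V b} (hx : x ∈ Fe b ℓ) :
    extF b ℓ g x = g ⟨x, hx⟩ := dif_pos hx

lemma CCol_eq_filter {ℓ : ℕ} {ω : V b → Bool} (hroot : ω [] = true) :
    CCol b ℓ ω = (PCs b ℓ).filter (fun C => ∀ x ∈ C, ω x = true) := by
  ext C
  simp only [CCol, PCs, Finset.mem_filter, Finset.mem_powerset]
  constructor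
  · rintro ⟨hsub, hpc⟩
    exact ⟨⟨fun x hx => Finset.mem_of_subset (Finset.filter_subset _ _) (hsub hx), hpc⟩,
      fun x hx => region_free (hsub hx)⟩
  · rintro ⟨⟨hball, hpc⟩, hfree⟩
    refine ⟨fun x hx => ?_, hpc⟩
    rw [mem_region_iff]
    exact ⟨mem_ball.1 (hball hx), fun k => hfree _ (take_mem_of_PC hpc hx k)⟩

lemma erase_subset_Fe {ℓ : ℕ} {C : Finset (V b)} (hC : C ∈ PCs b ℓ) :
    C.erase [] ⊆ Fe b ℓ := by
  intro x hx
  rw [Finset.mem_erase] at hx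
  rw [Fe, Finset.mem_erase]
  refine ⟨hx.1, ?_⟩
  have := mem_ball.1 (Finset.mem_powerset.1 (Finset.mem_filter.1 hC).1 hx.2)
  rw [mem_ball]
  omega

lemma chOut_subset_Fe {ℓ : ℕ} {C : Finset (V b)} (hC : C ∈ PCs b ℓ) :
    chOut b C ⊆ Fe b ℓ := by
  intro z hz
  obtain ⟨hne, hd, -⟩ := mem_chOut.1 hz
  rw [Fe, Finset.mem_erase]
  refine ⟨hne, ?_⟩
  have h1 := mem_ball.1 (Finset.mem_powerset.1 (Finset.mem_filter.1 hC).1 hd)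
  have h2 : z.dropLast.length = z.length - 1 := List.length_dropLast
  have h3 : 0 < z.length := List.length_pos_iff.2 hne
  rw [mem_ball]
  omega

lemma erase_disj_chOut {C : Finset (V b)} : Disjoint (C.erase []) (chOut b C) := by
  rw [Finset.disjoint_left]
  intro z hz hz'
  exact (mem_chOut.1 hz').2.2 (Finset.mem_of_mem_erase hz)

lemma T_eval (p β₀ : ℝ) (ℓ : ℕ) :
    ∑ g : {x // x ∈ Fe b ℓ} → Bool,
        (∏ x ∈ Fe b ℓ, wr p (extF b ℓ g x)) * Sstar b β₀ ℓ (extF b ℓ g)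
      = Real.exp (2 * β₀) *
        ∑ C ∈ PCs b ℓ, p ^ (C.card - 1) * q0 p β₀ ^ (b * C.card - (C.card - 1)) := by
  set φ : Bool → ℝ := fun s => if s then Real.exp (-(2 * β₀)) else Real.exp (2 * β₀) with hφ
  have hSrw : ∀ g : {x // x ∈ Fe b ℓ} → Bool, Sstar b β₀ ℓ (extF b ℓ g)
      = ∑ C ∈ PCs b ℓ,
          (∏ x ∈ C.erase [], (if extF b ℓ g x = true then (1 : ℝ) else 0)) *
          (Real.exp (2 * β₀) * ∏ z ∈ chOut b C, φ (extF b ℓ g z)) := by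
    intro g
    rw [Sstar, CCol_eq_filter (extF_root g), Finset.sum_filter]
    refine Finset.sum_congr rfl fun C hC => ?_
    by_cases hfree : ∀ x ∈ C, extF b ℓ g x = true
    · rw [if_pos hfree]
      have hind : ∏ x ∈ C.erase [], (if extF b ℓ g x = true then (1 : ℝ) else 0) = 1 :=
        Finset.prod_eq_one fun x hx => by rw [if_pos (hfree x (Finset.mem_of_mem_erase hx))]
      rw [hind, one_mul]
      have harg : 2 * β₀ * (1 - eC b C (extF b ℓ g))
          = 2 * β₀ + ∑ z ∈ chOut b C, (-(2 * β₀)) * spin (extF b ℓ g z) := by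
        rw [eC, mul_one_sub, Finset.mul_sum, sub_eq_add_neg, ← Finset.sum_neg_distrib]
        exact congrArg _ (Finset.sum_congr rfl fun z _ => by ring)
      rw [harg, Real.exp_add, Real.exp_sum]
      congr 1
      refine Finset.prod_congr rfl fun z hz => ?_
      rw [hφ]
      cases hgz : extF b ℓ g z
      · norm_num [spin]
      · norm_num [spin]
    · rw [if_neg hfree]
      push_neg at hfree
      obtain ⟨x, hx, hfx⟩ := hfree
      have hxe : x ∈ C.erase [] :=
        Finset.mem_erase.2 ⟨fun h => hfx (h ▸ extF_root g), hx⟩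
      rw [Finset.prod_eq_zero hxe (by rw [if_neg hfx]), zero_mul]
  calc ∑ g : {x // x ∈ Fe b ℓ} → Bool,
        (∏ x ∈ Fe b ℓ, wr p (extF b ℓ g x)) * Sstar b β₀ ℓ (extF b ℓ g)
      = ∑ C ∈ PCs b ℓ, ∑ g : {x // x ∈ Fe b ℓ} → Bool,
          (∏ x ∈ Fe b ℓ, wr p (extF b ℓ g x)) *
            ((∏ x ∈ C.erase [], (if extF b ℓ g x = true then (1 : ℝ) else 0)) *
            (Real.exp (2 * β₀) * ∏ z ∈ chOut b C, φ (extF b ℓ g z))) := by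
        rw [Finset.sum_congr rfl fun g _ => by rw [hSrw g, Finset.mul_sum]]
        exact Finset.sum_comm
  _ = Real.exp (2 * β₀) *
        ∑ C ∈ PCs b ℓ, p ^ (C.card - 1) * q0 p β₀ ^ (b * C.card - (C.card - 1)) := by
      rw [Finset.mul_sum]
      refine Finset.sum_congr rfl fun C hC => ?_
      have hpc : PCpred b C := (Finset.mem_filter.1 hC).2
      have hC'F : C.erase [] ⊆ Fe b ℓ := erase_subset_Fe hC
      have hchF : chOut b C ⊆ Fe b ℓ := chOut_subset_Fe hC
      have hdisj : Disjoint (C.erase []) (chOut b C) := erase_disj_chOut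
      set h : V b → Bool → ℝ := fun x s => wr p s *
        ((if x ∈ C.erase [] then (if s = true then (1 : ℝ) else 0) else 1) *
         (if x ∈ chOut b C then φ s else 1)) with hh
      have hgterm : ∀ g : {x // x ∈ Fe b ℓ} → Bool,
          (∏ x ∈ Fe b ℓ, wr p (extF b ℓ g x)) *
            ((∏ x ∈ C.erase [], (if extF b ℓ g x = true then (1 : ℝ) else 0)) *
            (Real.exp (2 * β₀) * ∏ z ∈ chOut b C, φ (extF b ℓ g z)))
          = Real.exp (2 * β₀) * ∏ x ∈ Fe b ℓ, h x (extF b ℓ g x) := by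
        intro g
        have e1 : ∏ x ∈ C.erase [], (if extF b ℓ g x = true then (1 : ℝ) else 0)
            = ∏ x ∈ Fe b ℓ,
                (if x ∈ C.erase [] then (if extF b ℓ g x = true then (1 : ℝ) else 0) else 1) := by
          rw [← Finset.prod_filter, Finset.filter_mem_eq_inter, Finset.inter_eq_right.2 hC'F]
        have e2 : ∏ z ∈ chOut b C, φ (extF b ℓ g z)
            = ∏ x ∈ Fe b ℓ, (if x ∈ chOut b C then φ (extF b ℓ g x) else 1) := by
          rw [← Finset.prod_filter, Finset.filter_mem_eq_inter, Finset.inter_eq_right.2 hchF]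
        simp only [hh]
        rw [e1, e2, Finset.prod_mul_distrib, Finset.prod_mul_distrib]
        ring
      rw [Finset.sum_congr rfl fun g _ => hgterm g, ← Finset.mul_sum]
      congr 1
      have hattach : ∀ g : {x // x ∈ Fe b ℓ} → Bool,
          ∏ x ∈ Fe b ℓ, h x (extF b ℓ g x) = ∏ x : {x // x ∈ Fe b ℓ}, h x.1 (g x) := by
        intro g
        rw [← Finset.prod_attach (Fe b ℓ) (fun x => h x (extF b ℓ g x))]
        rw [Finset.univ_eq_attach]
        exact Finset.prod_congr rfl fun x _ => by rw [extF_mem g x.2]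
      rw [Finset.sum_congr rfl fun g _ => hattach g]
      have hpi : ∑ g : {x // x ∈ Fe b ℓ} → Bool, ∏ x : {x // x ∈ Fe b ℓ}, h x.1 (g x)
          = ∏ x : {x // x ∈ Fe b ℓ}, ∑ s : Bool, h x.1 s := by
        have hpi' := Finset.prod_univ_sum (fun _ : {x // x ∈ Fe b ℓ} => (Finset.univ : Finset Bool))
          (fun x s => h x.1 s)
        rw [Fintype.piFinset_univ] at hpi'
        exact hpi'.symm
      rw [hpi]
      have hval : ∀ x : {x // x ∈ Fe b ℓ}, ∑ s : Bool, h x.1 s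
          = (if x.1 ∈ C.erase [] then p else 1) * (if x.1 ∈ chOut b C then q0 p β₀ else 1) := by
        intro x
        rw [Fintype.sum_bool, hh]
        by_cases h1 : x.1 ∈ C.erase []
        · have h2 : x.1 ∉ chOut b C := Finset.disjoint_left.1 hdisj h1
          simp only [if_pos h1, if_neg h2, wr]
          norm_num
        · by_cases h2 : x.1 ∈ chOut b C
          · simp only [if_neg h1, if_pos h2, wr, hφ, q0]
            norm_num
          · simp only [if_neg h1, if_neg h2, wr]
            norm_num
      rw [Finset.prod_congr rfl fun x _ => hval x, Finset.prod_mul_distrib]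
      have hc1 : ∏ x : {x // x ∈ Fe b ℓ}, (if x.1 ∈ C.erase [] then p else 1)
          = p ^ (C.card - 1) := by
        rw [Finset.univ_eq_attach, Finset.prod_attach (Fe b ℓ)
          (fun x => if x ∈ C.erase [] then p else 1), ← Finset.prod_filter,
          Finset.filter_mem_eq_inter, Finset.inter_eq_right.2 hC'F, Finset.prod_const,
          Finset.card_erase_of_mem hpc.1]
      have hc2 : ∏ x : {x // x ∈ Fe b ℓ}, (if x.1 ∈ chOut b C then q0 p β₀ else 1)
          = q0 p β₀ ^ (b * C.card - (C.card - 1)) := by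
        rw [Finset.univ_eq_attach, Finset.prod_attach (Fe b ℓ)
          (fun x => if x ∈ chOut b C then q0 p β₀ else 1), ← Finset.prod_filter,
          Finset.filter_mem_eq_inter, Finset.inter_eq_right.2 hchF, Finset.prod_const,
          card_chOut hpc]
      rw [hc1, hc2]

lemma numerics (p : ℝ) (hp : 1 / 2 < p) (hp1 : p ≤ 1) :
    ∃ β₀ δ : ℝ, 0 < β₀ ∧ 0 < δ ∧ δ < 1 ∧ Real.exp (2 * β₀) ≤ 3 / 2 ∧
      0 < q0 p β₀ ∧ q0 p β₀ ≤ 1 - δ := by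
  have hp0 : 0 < p := by linarith
  set ε : ℝ := (2 * p - 1) / (2 * p) with hε
  have hε0 : 0 < ε := div_pos (by linarith) (by linarith)
  have hε2 : ε ≤ 1 / 2 := by
    rw [hε, div_le_iff₀ (by linarith)]
    linarith
  set u : ℝ := 1 + ε with hu
  have hu1 : 1 < u := by linarith
  have hu0 : 0 < u := by linarith
  set β₀ : ℝ := Real.log u / 2 with hβ₀
  have hβ₀0 : 0 < β₀ := by
    have := Real.log_pos hu1
    positivity
  have hexp : Real.exp (2 * β₀) = u := by
    rw [hβ₀, show 2 * (Real.log u / 2) = Real.log u by ring, Real.exp_log hu0]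
  have hexp' : Real.exp (-(2 * β₀)) = u⁻¹ := by
    rw [Real.exp_neg, hexp]
  set δ : ℝ := (2 * p - 1) ^ 2 / (4 * p) with hδ
  have hδ0 : 0 < δ := div_pos (by nlinarith) (by linarith)
  have hq0v : q0 p β₀ = p * u⁻¹ + (1 - p) * u := by rw [q0, hexp, hexp']
  have hq0pos : 0 < q0 p β₀ := by
    rw [hq0v]
    have h1 : 0 < p * u⁻¹ := by positivity
    nlinarith
  have hkey : q0 p β₀ ≤ 1 - δ := by
    rw [hq0v]
    have h1 : p * u⁻¹ ≤ p * (1 - ε + ε ^ 2) := by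
      rw [mul_le_mul_iff_right₀ hp0, inv_le_iff_one_le_mul₀ hu0]
      nlinarith
    have h2 : p * (1 - ε + ε ^ 2) + (1 - p) * u = 1 - δ := by
      rw [hu, hε, hδ]
      field_simp
      ring
    calc p * u⁻¹ + (1 - p) * u ≤ p * (1 - ε + ε ^ 2) + (1 - p) * u :=
          add_le_add_left h1 _
    _ = 1 - δ := h2
  have hδ1 : δ < 1 := by nlinarith
  exact ⟨β₀, δ, hβ₀0, hδ0, hδ1, by rw [hexp]; linarith, hq0pos, hkey⟩

lemma exists_b0 (δ : ℝ) (hδ0 : 0 < δ) (hδ1 : δ < 1) :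
    ∃ b₀ : ℕ, ∀ b : ℕ, b₀ ≤ b →
      4 * (b : ℝ) * (1 - δ) ^ (b - 1) ≤ 1 ∧ 10 ≤ δ * b ∧ 2 ≤ b := by
  refine ⟨⌈(2 : ℝ) + 10 / δ + 32 / δ ^ 2⌉₊ + 2, fun b hb => ?_⟩
  have hbr : (2 : ℝ) + 10 / δ + 32 / δ ^ 2 ≤ (b : ℝ) := by
    calc (2 : ℝ) + 10 / δ + 32 / δ ^ 2 ≤ (⌈(2 : ℝ) + 10 / δ + 32 / δ ^ 2⌉₊ : ℝ) :=
          Nat.le_ceil _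
    _ ≤ (b : ℝ) := by exact_mod_cast le_trans (Nat.le_add_right _ 2) hb
  have hd10 : 0 < 10 / δ := by positivity
  have hd32 : 0 < 32 / δ ^ 2 := by positivity
  have hb2 : 2 ≤ b := by
    rcases Nat.lt_or_ge b 2 with h | h
    · exfalso
      have : (b : ℝ) ≤ 1 := by exact_mod_cast Nat.lt_succ_iff.1 h
      linarith
    · exact h
  have h10 : 10 ≤ δ * b := by
    have h1 : 10 / δ ≤ (b : ℝ) := by linarith
    calc (10 : ℝ) = δ * (10 / δ) := by field_simp
    _ ≤ δ * b := mul_le_mul_of_nonneg_left h1 (le_of_lt hδ0)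
  refine ⟨?_, h10, hb2⟩
  -- main bound
  set m : ℝ := ((b - 1 : ℕ) : ℝ) with hm
  have hmval : m = (b : ℝ) - 1 := by
    rw [hm, Nat.cast_sub (by omega)]
    simp
  have hm32 : 32 / δ ^ 2 ≤ m := by rw [hmval]; nlinarith
  have hmb : (b : ℝ) ≤ 2 * m := by
    rw [hmval]
    have : (2 : ℝ) ≤ (b : ℝ) := by exact_mod_cast hb2
    linarith
  have h1 : (1 - δ : ℝ) ^ (b - 1) ≤ Real.exp (-δ) ^ (b - 1) := by
    refine pow_le_pow_left₀ (by linarith) ?_ _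
    nlinarith [Real.add_one_le_exp (-δ)]
  have h2 : Real.exp (-δ) ^ (b - 1) = Real.exp (m * (-δ)) := by
    rw [Real.exp_nat_mul]
  have h3 : 4 * (b : ℝ) ≤ Real.exp (m * δ) := by
    have e1 : Real.exp (m * δ) = Real.exp (m * δ / 2) * Real.exp (m * δ / 2) := by
      rw [← Real.exp_add]
      ring_nf
    have e2 : 1 + m * δ / 2 ≤ Real.exp (m * δ / 2) := by
      have := Real.add_one_le_exp (m * δ / 2)
      linarith
    have hmδ : 0 ≤ m * δ / 2 := by
      have hm0 : 0 ≤ m := by positivity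
      positivity
    have hmsq : 16 * (b : ℝ) ≤ m ^ 2 * δ ^ 2 := by
      have hm0 : (0 : ℝ) ≤ m := by positivity
      have h32 : 32 ≤ m * δ ^ 2 := by
        rw [div_le_iff₀ (by positivity : (0 : ℝ) < δ ^ 2)] at hm32
        linarith
      have : 32 * m ≤ m ^ 2 * δ ^ 2 := by nlinarith [mul_le_mul_of_nonneg_left h32 hm0]
      nlinarith
    nlinarith [e2, Real.exp_pos (m * δ / 2)]
  have h4 : Real.exp (m * (-δ)) = (Real.exp (m * δ))⁻¹ := by
    rw [← Real.exp_neg]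
    ring_nf
  have hbpos : (0 : ℝ) < 4 * (b : ℝ) := by positivity
  calc 4 * (b : ℝ) * (1 - δ) ^ (b - 1) ≤ 4 * (b : ℝ) * Real.exp (m * (-δ)) := by
        refine mul_le_mul_of_nonneg_left (le_trans h1 (le_of_eq h2)) (by positivity)
  _ ≤ 1 := by
        rw [h4]
        rw [mul_inv_le_iff₀ (Real.exp_pos _)]
        linarith

end Stmt2Aux


set_option maxHeartbeats 1000000 in
open Stmt2Aux in
/-- for every `p > 1/2` there are `b₀`, `β₀`, `c > 0` such that for all
`b ≥ b₀`, `β ≥ β₀`, `h = 0` and every `ℓ ≥ 1`, `ℙ(R^ℓ(ω) > e^{-2β}) ≤ e^{-cb}`,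
the environment being `ω_r = +1` fixed and i.i.d. Bernoulli(p) elsewhere. -/
theorem stmt2 (p : ℝ) (hp : 1 / 2 < p) :
    ∃ b₀ : ℕ, ∃ β₀ : ℝ, ∃ c : ℝ, 0 < c ∧
      ∀ b : ℕ, b₀ ≤ b → ∀ β : ℝ, β₀ ≤ β → ∀ ℓ : ℕ, 1 ≤ ℓ →
        ∀ P : Measure (V b → Bool), IsBernoulliProductRoot b p P →
          P {ω | ENNReal.ofReal (Real.exp (-(2 * β))) < RfinE b β 0 ℓ ω} ≤
            ENNReal.ofReal (Real.exp (-(c * b))) := by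
  classical
  by_cases hp1 : p ≤ 1
  · obtain ⟨β₀, δ, hβ₀0, hδ0, hδ1, hu32, hq0pos, hq0le⟩ := numerics p hp hp1
    obtain ⟨b₀', hb₀'⟩ := exists_b0 δ hδ0 hδ1
    refine ⟨b₀', β₀, δ / 2, by linarith, ?_⟩
    intro b hb β hβ ℓ hℓ P hP
    obtain ⟨hc1, hc10, hb2⟩ := hb₀' b hb
    obtain ⟨hPprob, hPcyl⟩ := hP
    haveI : IsProbabilityMeasure P := hPprob
    have hb1 : 1 ≤ b := by omega
    have hp0 : (0 : ℝ) < p := by linarith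
    have hq0nn : 0 ≤ q0 p β₀ := le_of_lt hq0pos
    set G : Finset ({x // x ∈ Fe b ℓ} → Bool) :=
      Finset.univ.filter (fun g => 1 / 2 < Sstar b β₀ ℓ (extF b ℓ g)) with hG
    set Cyl : ({x // x ∈ Fe b ℓ} → Bool) → Set (V b → Bool) := fun g =>
      {ω | ω [] = true ∧ ∀ x ∈ Fe b ℓ, ω x = extF b ℓ g x} with hCyl
    have hsubset : {ω : V b → Bool | ENNReal.ofReal (Real.exp (-(2 * β))) < RfinE b β 0 ℓ ω}
        ⊆ {ω : V b → Bool | ω [] ≠ true} ∪ ⋃ g ∈ G, Cyl g := by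
      intro ω hω
      by_cases hroot : ω [] = true
      · have hS : 1 / 2 < Sstar b β₀ ℓ ω := by
          by_contra hS
          push_neg at hS
          exact absurd (det_bound hβ₀0 hβ hroot hS) (not_le.2 hω)
        refine Set.mem_union_right _ ?_
        set g : {x // x ∈ Fe b ℓ} → Bool := fun x => ω x.1 with hg
        have hagree : ∀ x ∈ ball b (ℓ + 1), ω x = extF b ℓ g x := by
          intro x hx
          by_cases hxF : x ∈ Fe b ℓ
          · rw [extF_mem g hxF]
          · have hxe : x = [] := by
              rw [Fe, Finset.mem_erase] at hxF
              push_neg at hxF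
              by_contra hne
              exact (hne (by tauto))
            rw [hxe, extF_root]
            exact hroot
        have hSg : 1 / 2 < Sstar b β₀ ℓ (extF b ℓ g) := by
          rw [← Sstar_congr hagree]
          exact hS
        refine Set.mem_iUnion₂.2 ⟨g, Finset.mem_filter.2 ⟨Finset.mem_univ _, hSg⟩, ?_⟩
        refine ⟨hroot, fun x hx => hagree x ?_⟩
        exact Finset.mem_of_mem_erase hx
      · exact Set.mem_union_left _ hroot
    have hzero : P {ω : V b → Bool | ω [] ≠ true} = 0 := by
      have hms : MeasurableSet {ω : V b → Bool | ω [] = true} := by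
        have heq : {ω : V b → Bool | ω [] = true} = (fun ω : V b → Bool => ω []) ⁻¹' {true} := rfl
        rw [heq]
        exact measurable_pi_apply _ (measurableSet_singleton true)
      have h1 : P {ω : V b → Bool | ω [] = true} = 1 := by
        have hset : {ω : V b → Bool | ω [] = true ∧ ∀ x ∈ (∅ : Finset (V b)), ω x = (fun _ => true) x}
            = {ω : V b → Bool | ω [] = true} := by
          ext ω
          simp
        rw [← hset, hPcyl ∅ (fun _ => true) (by simp)]
        simp
      have hcompl : {ω : V b → Bool | ω [] ≠ true} = {ω : V b → Bool | ω [] = true}ᶜ := by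
        ext ω
        simp
      rw [hcompl, measure_compl hms (measure_ne_top P _), h1, measure_univ, tsub_self]
    have hwrnn : ∀ s, 0 ≤ wr p s := by
      intro s
      rw [wr]
      split <;> linarith
    have hcylP : ∀ g : {x // x ∈ Fe b ℓ} → Bool,
        P (Cyl g) = ENNReal.ofReal (∏ x ∈ Fe b ℓ, wr p (extF b ℓ g x)) := by
      intro g
      rw [hCyl]
      have h2 := hPcyl (Fe b ℓ) (extF b ℓ g) (by simp [Fe])
      rw [h2, ENNReal.ofReal_prod_of_nonneg (fun x _ => hwrnn _)]
      exact Finset.prod_congr rfl fun x _ => by rw [wr]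
    have hWnn : ∀ g : {x // x ∈ Fe b ℓ} → Bool,
        0 ≤ ∏ x ∈ Fe b ℓ, wr p (extF b ℓ g x) :=
      fun g => Finset.prod_nonneg fun x _ => hwrnn _
    have hSnn : ∀ g : {x // x ∈ Fe b ℓ} → Bool, 0 ≤ Sstar b β₀ ℓ (extF b ℓ g) :=
      fun g => Finset.sum_nonneg fun _ _ => Real.exp_nonneg _
    -- the real-valued first-moment estimate
    have hreal : ∑ g : {x // x ∈ Fe b ℓ} → Bool,
        2 * ((∏ x ∈ Fe b ℓ, wr p (extF b ℓ g x)) * Sstar b β₀ ℓ (extF b ℓ g))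
        ≤ Real.exp (-(δ / 2 * b)) := by
      set B := ∑ C ∈ PCs b ℓ, p ^ (C.card - 1) * q0 p β₀ ^ (b * C.card - (C.card - 1)) with hB
      have hBnn : 0 ≤ B :=
        Finset.sum_nonneg fun C _ => mul_nonneg (pow_nonneg (le_of_lt hp0) _)
          (pow_nonneg hq0nn _)
      set w : ℝ := p * q0 p β₀ ^ (b - 1) with hwdef
      have hwnn : (0 : ℝ) ≤ w := mul_nonneg (le_of_lt hp0) (pow_nonneg hq0nn _)
      have hwle : w ≤ (1 - δ) ^ (b - 1) := by
        calc w ≤ 1 * q0 p β₀ ^ (b - 1) :=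
              mul_le_mul_of_nonneg_right hp1 (pow_nonneg hq0nn _)
        _ = q0 p β₀ ^ (b - 1) := one_mul _
        _ ≤ (1 - δ) ^ (b - 1) := pow_le_pow_left₀ hq0nn hq0le _
      have hwb : 4 * (b : ℝ) * w ≤ 1 := by
        calc 4 * (b : ℝ) * w ≤ 4 * (b : ℝ) * (1 - δ) ^ (b - 1) :=
              mul_le_mul_of_nonneg_left hwle (by positivity)
        _ ≤ 1 := hc1
      have hpow2 : (1 + 2 * w) ^ b ≤ 2 := by
        have h1 : 2 * (b : ℝ) * (2 * w) ≤ 1 := by nlinarith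
        have := pow_one_add_le (2 * w) (by linarith) b h1
        linarith
      have hsumw := sum_pow_card_le hwnn hpow2 ℓ
      have hterm : ∀ C ∈ PCs b ℓ, p ^ (C.card - 1) * q0 p β₀ ^ (b * C.card - (C.card - 1))
          = (q0 p β₀ / p) * w ^ C.card := by
        intro C hC
        have hm1 : 1 ≤ C.card :=
          Finset.card_pos.2 ⟨[], ((Finset.mem_filter.1 hC).2).1⟩
        have hexp : b * C.card - (C.card - 1) = (b - 1) * C.card + 1 := by
          have hbm : C.card ≤ b * C.card := Nat.le_mul_of_pos_left _ (by omega)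
          rw [Nat.sub_mul, one_mul]
          omega
        rw [hexp, pow_add, pow_mul, pow_one, hwdef, mul_pow, ← pow_mul]
        rw [show p ^ C.card = p ^ (C.card - 1) * p from by
          rw [← pow_succ]
          congr 1
          omega]
        field_simp
      have hq0b : (q0 p β₀ / p) * (2 * w) = 2 * q0 p β₀ ^ b := by
        have hpow : q0 p β₀ ^ b = q0 p β₀ ^ (b - 1) * q0 p β₀ := by
          rw [← pow_succ]
          congr 1
          omega
        rw [hwdef, hpow]
        field_simp
      have hBle : B ≤ 2 * q0 p β₀ ^ b := by
        have e1 : B = (q0 p β₀ / p) * ∑ C ∈ PCs b ℓ, w ^ C.card := by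
          rw [Finset.mul_sum]
          exact Finset.sum_congr rfl hterm
        rw [e1, ← hq0b]
        exact mul_le_mul_of_nonneg_left hsumw (div_nonneg hq0nn (le_of_lt hp0))
      have hq0d : q0 p β₀ ^ b ≤ Real.exp ((b : ℕ) * (-δ)) := by
        rw [Real.exp_nat_mul]
        refine pow_le_pow_left₀ hq0nn ?_ b
        nlinarith [Real.add_one_le_exp (-δ)]
      have h6 : (6 : ℝ) ≤ Real.exp (δ * b / 2) := by
        nlinarith [Real.add_one_le_exp (δ * (b : ℝ) / 2)]
      have hsplit : Real.exp (-(δ / 2 * (b : ℝ)))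
          = Real.exp (δ * b / 2) * Real.exp ((b : ℕ) * (-δ)) := by
        rw [← Real.exp_add]
        congr 1
        push_cast
        ring
      calc ∑ g : {x // x ∈ Fe b ℓ} → Bool,
            2 * ((∏ x ∈ Fe b ℓ, wr p (extF b ℓ g x)) * Sstar b β₀ ℓ (extF b ℓ g))
          = 2 * (Real.exp (2 * β₀) * B) := by
            rw [← Finset.mul_sum, T_eval p β₀ ℓ]
      _ ≤ 2 * ((3 / 2) * B) :=
            mul_le_mul_of_nonneg_left (mul_le_mul_of_nonneg_right hu32 hBnn) (by norm_num)
      _ = 3 * B := by ring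
      _ ≤ 3 * (2 * q0 p β₀ ^ b) := mul_le_mul_of_nonneg_left hBle (by norm_num)
      _ = 6 * q0 p β₀ ^ b := by ring
      _ ≤ 6 * Real.exp ((b : ℕ) * (-δ)) := mul_le_mul_of_nonneg_left hq0d (by norm_num)
      _ ≤ Real.exp (-(δ / 2 * (b : ℝ))) := by
            rw [hsplit]
            exact mul_le_mul_of_nonneg_right h6 (Real.exp_nonneg _)
    -- assemble in ℝ≥0∞
    calc P {ω : V b → Bool | ENNReal.ofReal (Real.exp (-(2 * β))) < RfinE b β 0 ℓ ω}
        ≤ P ({ω : V b → Bool | ω [] ≠ true} ∪ ⋃ g ∈ G, Cyl g) := measure_mono hsubset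
    _ ≤ P {ω : V b → Bool | ω [] ≠ true} + P (⋃ g ∈ G, Cyl g) := measure_union_le _ _
    _ = P (⋃ g ∈ G, Cyl g) := by rw [hzero, zero_add]
    _ ≤ ∑ g ∈ G, P (Cyl g) := measure_biUnion_finset_le G Cyl
    _ ≤ ∑ g ∈ G, ENNReal.ofReal
          (2 * ((∏ x ∈ Fe b ℓ, wr p (extF b ℓ g x)) * Sstar b β₀ ℓ (extF b ℓ g))) := by
        refine Finset.sum_le_sum fun g hg => ?_
        rw [hcylP g]
        refine ENNReal.ofReal_le_ofReal ?_
        have hgS : 1 / 2 < Sstar b β₀ ℓ (extF b ℓ g) := (Finset.mem_filter.1 hg).2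
        nlinarith [hWnn g, hSnn g]
    _ ≤ ∑ g : {x // x ∈ Fe b ℓ} → Bool, ENNReal.ofReal
          (2 * ((∏ x ∈ Fe b ℓ, wr p (extF b ℓ g x)) * Sstar b β₀ ℓ (extF b ℓ g))) :=
        Finset.sum_le_sum_of_subset (Finset.filter_subset _ _)
    _ = ENNReal.ofReal (∑ g : {x // x ∈ Fe b ℓ} → Bool,
          2 * ((∏ x ∈ Fe b ℓ, wr p (extF b ℓ g x)) * Sstar b β₀ ℓ (extF b ℓ g))) :=
        (ENNReal.ofReal_sum_of_nonneg fun g _ =>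
          mul_nonneg (by norm_num) (mul_nonneg (hWnn g) (hSnn g))).symm
    _ ≤ ENNReal.ofReal (Real.exp (-(δ / 2 * b))) := ENNReal.ofReal_le_ofReal hreal
  · push_neg at hp1
    refine ⟨1, 1, 1, one_pos, ?_⟩
    intro b hb β hβ ℓ hℓ P hP
    exfalso
    obtain ⟨hPprob, hPcyl⟩ := hP
    haveI : IsProbabilityMeasure P := hPprob
    have hbpos : 0 < b := hb
    set x : V b := [⟨0, hbpos⟩] with hx
    have hnm : ([] : V b) ∉ ({x} : Finset (V b)) := by simp [hx]
    have h2 := hPcyl {x} (fun _ => true) hnm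
    have hle : P {ω : V b → Bool | ω [] = true ∧ ∀ y ∈ ({x} : Finset (V b)), ω y = (fun _ => true) y} ≤ 1 :=
      prob_le_one
    rw [h2] at hle
    have h3 : (∏ y ∈ ({x} : Finset (V b)), ENNReal.ofReal (if (fun _ => true) y then p else 1 - p))
        = ENNReal.ofReal p := by simp
    rw [h3] at hle
    rw [ENNReal.ofReal_le_one] at hle
    linarith


end Paper
end

section
/- For every a > 0 there exists b₀ ∈ ℕ such that for every integer b ≥ b₀ the following holds: if (q_ℓ)_{ℓ ≥ 1} are nonnegative real numbers satisfying q_1 ≤ e^{−ab} and q_{ℓ+1} ≤ e^{−ab} + Σ_{n=2}^{b} binom(b,n) q_ℓ^n for every ℓ ≥ 1, then q_ℓ ≤ e^{−ab/2} for every ℓ ≥ 1. -/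
namespace Paper

open Filter Real

/-- for every `a > 0` and all large `b`, if `q_1 ≤ e^{-ab}` and
`q_{ℓ+1} ≤ e^{-ab} + Σ_{n=2}^b C(b,n) q_ℓⁿ`, then `q_ℓ ≤ e^{-ab/2}` for every `ℓ ≥ 1`. -/
theorem stmt14 (a : ℝ) (ha : 0 < a) :
    ∃ b₀ : ℕ, ∀ b : ℕ, b₀ ≤ b →
      ∀ q : ℕ → ℝ, (∀ ℓ : ℕ, 1 ≤ ℓ → 0 ≤ q ℓ) →
        q 1 ≤ Real.exp (-(a * b)) →
        (∀ ℓ : ℕ, 1 ≤ ℓ →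
          q (ℓ + 1) ≤ Real.exp (-(a * b)) +
            ∑ n ∈ Finset.Icc 2 b, (b.choose n : ℝ) * q ℓ ^ n) →
        ∀ ℓ : ℕ, 1 ≤ ℓ → q ℓ ≤ Real.exp (-(a * b / 2)) := by
  -- the key smallness condition: (1 + b³)·e^{-ab/2} ≤ 1 for large b
  have h1 : Tendsto (fun t : ℝ => Real.exp (-t) + (8 / a ^ 3) * (t ^ 3 * Real.exp (-t)))
      atTop (nhds 0) := by
    have := (Real.tendsto_exp_neg_atTop_nhds_zero).add
      ((tendsto_const_nhds (x := (8 / a ^ 3))).mul (tendsto_pow_mul_exp_neg_atTop_nhds_zero 3))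
    simpa using this
  have h2 : Tendsto (fun b : ℕ => a * (b : ℝ) / 2) atTop atTop := by
    exact ((tendsto_natCast_atTop_atTop (R := ℝ)).const_mul_atTop ha).atTop_div_const two_pos
  have h3 : Tendsto (fun b : ℕ => (1 + (b : ℝ) ^ 3) * Real.exp (-(a * b / 2)))
      atTop (nhds 0) := by
    have := h1.comp h2
    refine this.congr fun b => ?_
    have : ((a * (b : ℝ) / 2) ^ 3) = a ^ 3 * (b : ℝ) ^ 3 / 8 := by ring
    simp only [Function.comp, this]
    field_simp
  obtain ⟨b₀, hb₀⟩ := eventually_atTop.1 (h3.eventually_le_const one_pos)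
  refine ⟨b₀, fun b hb q hq hq1 hrec => ?_⟩
  have hkey : (1 + (b : ℝ) ^ 3) * Real.exp (-(a * b / 2)) ≤ 1 := hb₀ b hb
  set E := Real.exp (-(a * b / 2)) with hE
  have hEpos : 0 < E := Real.exp_pos _
  have hb3 : (1 : ℝ) ≤ 1 + (b : ℝ) ^ 3 := by
    have : (0:ℝ) ≤ (b : ℝ) ^ 3 := by positivity
    linarith
  have hE1 : E ≤ 1 := by nlinarith
  have hEsq : Real.exp (-(a * b)) = E ^ 2 := by
    rw [hE, sq, ← Real.exp_add]
    congr 1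
    ring
  have hbE : (b : ℝ) * E ≤ 1 := by
    have hbb : (b : ℝ) ≤ 1 + (b : ℝ) ^ 3 := by
      rcases Nat.eq_zero_or_pos b with h | h
      · simp [h]
      · have : (1 : ℝ) ≤ (b : ℝ) := by exact_mod_cast h
        have h2b : (1:ℝ) ≤ (b:ℝ) ^ 2 := by nlinarith
        nlinarith
    nlinarith
  -- induction on ℓ
  intro ℓ hℓ
  induction ℓ, hℓ using Nat.le_induction with
  | base =>
    calc q 1 ≤ E ^ 2 := by rw [← hEsq]; exact hq1
    _ ≤ E := by nlinarith
  | succ ℓ hℓ ih =>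
    have hqℓ : 0 ≤ q ℓ := hq ℓ hℓ
    have hbE0 : 0 ≤ (b : ℝ) * E := by positivity
    have hsum : ∑ n ∈ Finset.Icc 2 b, (b.choose n : ℝ) * q ℓ ^ n
        ≤ ∑ _n ∈ Finset.Icc 2 b, ((b : ℝ) * E) ^ 2 := by
      apply Finset.sum_le_sum
      intro n hn
      obtain ⟨hn2, hnb⟩ := Finset.mem_Icc.1 hn
      have hchoose : (b.choose n : ℝ) ≤ (b : ℝ) ^ n := by
        exact_mod_cast Nat.choose_le_pow b n
      have hqE : q ℓ ^ n ≤ E ^ n := pow_le_pow_left₀ hqℓ ih n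
      calc (b.choose n : ℝ) * q ℓ ^ n ≤ (b : ℝ) ^ n * E ^ n := by
            apply mul_le_mul hchoose hqE (by positivity) (by positivity)
        _ = ((b : ℝ) * E) ^ n := (mul_pow _ _ _).symm
        _ ≤ ((b : ℝ) * E) ^ 2 := by exact pow_le_pow_of_le_one hbE0 hbE hn2
    have hcard : ((Finset.Icc 2 b).card : ℝ) ≤ (b : ℝ) := by
      rw [Nat.card_Icc]
      exact_mod_cast (by omega : b + 1 - 2 ≤ b)
    calc q (ℓ + 1) ≤ E ^ 2 + ∑ n ∈ Finset.Icc 2 b, (b.choose n : ℝ) * q ℓ ^ n := by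
          rw [← hEsq]; exact hrec ℓ hℓ
      _ ≤ E ^ 2 + ((Finset.Icc 2 b).card : ℝ) * ((b : ℝ) * E) ^ 2 := by
          rw [Finset.sum_const, nsmul_eq_mul] at hsum
          linarith
      _ ≤ E ^ 2 + (b : ℝ) * ((b : ℝ) * E) ^ 2 := by nlinarith [sq_nonneg ((b:ℝ)*E)]
      _ ≤ E := by nlinarith [hEpos.le, mul_nonneg (Nat.cast_nonneg b : (0:ℝ) ≤ b) hEpos.le]

end Paper
end

section
/- For every a ∈ (0,1], every integer b ≥ 2, and every u ∈ (0,1), there exists ε₀ ∈ (0,1) such that for every ε ∈ (0, ε₀] the following holds: let k be an integer with k ≥ 4/a and let r₀, r₁, …, r_k be nonnegative real numbers satisfying r_j ≤ ε^{a−(b−1)} (2ε)^{b−1} F_ε(r_{j−1}) for every 1 ≤ j ≤ k, where F_ε(x) := (ε + x)/(1 + εx). Then r_k ≤ u ε. -/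
namespace Paper

/-- The one-step transfer function `F_ε(x) = (ε + x)/(1 + εx)` of the Ising ratio
recursion. -/
noncomputable def Ftr (ε x : ℝ) : ℝ := (ε + x) / (1 + ε * x)

lemma Ftr_le_inv {ε x : ℝ} (hε : 0 < ε) (hε1 : ε ≤ 1) (hx : 0 ≤ x) :
    Ftr ε x ≤ 1 / ε := by
  rw [Ftr, div_le_div_iff₀ (by positivity) hε]
  nlinarith

lemma Ftr_le_add {ε x : ℝ} (hε : 0 < ε) (hx : 0 ≤ x) :
    Ftr ε x ≤ ε + x := by
  rw [Ftr]
  apply div_le_self (by positivity)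
  nlinarith

set_option maxHeartbeats 800000 in
/-- contraction along a chain of `k ≥ 4/a` consecutive regular vertices:
if `r_j ≤ ε^{a-(b-1)} (2ε)^{b-1} F_ε(r_{j-1})` for `1 ≤ j ≤ k`, then `r_k ≤ uε`. -/
theorem stmt15 (a : ℝ) (ha0 : 0 < a) (ha1 : a ≤ 1) (b : ℕ) (hb : 2 ≤ b)
    (u : ℝ) (hu0 : 0 < u) (hu1 : u < 1) :
    ∃ ε₀ : ℝ, 0 < ε₀ ∧ ε₀ < 1 ∧
      ∀ ε : ℝ, 0 < ε → ε ≤ ε₀ →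
        ∀ k : ℕ, 4 / a ≤ (k : ℝ) →
          ∀ r : ℕ → ℝ, (∀ j : ℕ, 0 ≤ r j) →
            (∀ j : ℕ, 1 ≤ j → j ≤ k →
              r j ≤ ε ^ (a - ((b : ℝ) - 1)) * (2 * ε) ^ (b - 1) * Ftr ε (r (j - 1))) →
            r k ≤ u * ε := by
  have h2b : (0:ℝ) < 2 ^ (b+2) := by positivity
  set δ : ℝ := u / 2 ^ (b+2) with hδdef
  have hδ0 : 0 < δ := by positivity
  refine ⟨min (δ ^ (2/a)) (1/2), lt_min (by positivity) (by norm_num),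
    lt_of_le_of_lt (min_le_right _ _) (by norm_num), ?_⟩
  intro ε hε hεle k hk r hr hrec
  have hε1 : ε ≤ 1 := le_trans hεle (le_trans (min_le_right _ _) (by norm_num))
  have hεδ : ε ≤ δ ^ (2/a) := le_trans hεle (min_le_left _ _)
  -- `ε^(a/2) ≤ δ`
  have ha2 : ε ^ (a/2) ≤ δ := by
    calc ε ^ (a/2) ≤ (δ ^ (2/a)) ^ (a/2) :=
          Real.rpow_le_rpow hε.le hεδ (by positivity)
      _ = δ ^ (2/a * (a/2)) := (Real.rpow_mul hδ0.le _ _).symm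
      _ = δ ^ (1:ℝ) := by congr 1; field_simp
      _ = δ := Real.rpow_one δ
  set C : ℝ := 2 ^ (b-1) * ε ^ a with hCdef
  set D : ℝ := 2 ^ (b-1) * ε ^ (a/2) with hDdef
  have hD0 : 0 ≤ D := by positivity
  have hC0 : 0 ≤ C := by positivity
  have hpow : (2:ℝ)^(b+2) = 2^(b-1) * 8 := by
    rw [show b+2 = (b-1)+3 by omega, pow_add]; norm_num
  have hδ8 : (2:ℝ)^(b-1) * δ = u/8 := by
    rw [hδdef, hpow]; field_simp
  have hD : D ≤ u/8 := by
    rw [← hδ8, hDdef]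
    have : (0:ℝ) ≤ 2^(b-1) := by positivity
    nlinarith
  have hεa2_le1 : ε ^ (a/2) ≤ 1 := Real.rpow_le_one hε.le hε1 (by positivity)
  have hC_eq : C = D * ε ^ (a/2) := by
    rw [hCdef, hDdef, show a = a/2 + a/2 by ring, Real.rpow_add hε]; ring
  have hεa2_0 : 0 ≤ ε ^ (a/2) := by positivity
  have hC_le : C ≤ u/8 := by
    rw [hC_eq]
    calc D * ε ^ (a/2) ≤ D * 1 := by nlinarith
      _ = D := mul_one D
      _ ≤ u/8 := hD
  have hC_half : C ≤ 1/2 := by linarith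
  have hak : 4 ≤ a * k := by
    rw [div_le_iff₀ ha0] at hk; linarith
  have hk4 : (4:ℝ) ≤ (k:ℝ) := by
    have hk0 : (0:ℝ) ≤ (k:ℝ) := Nat.cast_nonneg k
    nlinarith
  have hk1 : 1 ≤ k := by exact_mod_cast (by linarith : (1:ℝ) ≤ (k:ℝ))
  -- rewrite the recursion hypothesis
  have hcoeff : ε ^ (a - ((b : ℝ) - 1)) * (2 * ε) ^ (b - 1) = C := by
    have h1b : ((b-1:ℕ):ℝ) = (b:ℝ) - 1 := by
      have := Nat.cast_sub (show 1 ≤ b by omega) (R := ℝ); simpa using this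
    have hεb : ε ^ (b-1:ℕ) = ε ^ ((b:ℝ)-1) := by
      rw [← Real.rpow_natCast ε (b-1), h1b]
    rw [mul_pow, hεb]
    calc ε ^ (a - ((b:ℝ)-1)) * (2^(b-1) * ε^((b:ℝ)-1))
        = 2^(b-1) * (ε^(a-((b:ℝ)-1)) * ε^((b:ℝ)-1)) := by ring
      _ = 2^(b-1) * ε^(a - ((b:ℝ)-1) + ((b:ℝ)-1)) := by rw [← Real.rpow_add hε]
      _ = C := by rw [show a - ((b:ℝ)-1) + ((b:ℝ)-1) = a by ring]
  have hrec' : ∀ j : ℕ, 1 ≤ j → j ≤ k → r j ≤ C * Ftr ε (r (j-1)) := by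
    intro j h1 h2
    have := hrec j h1 h2
    rwa [hcoeff] at this
  -- the key inductive bound
  have key : ∀ j : ℕ, 1 ≤ j → j ≤ k → r j ≤ C^j / ε + 2*C*ε := by
    intro j
    induction j with
    | zero => intro h; omega
    | succ n ih =>
      intro _ hjk
      rcases Nat.eq_zero_or_pos n with hn | hn
      · subst hn
        calc r 1 ≤ C * Ftr ε (r 0) := hrec' 1 le_rfl hjk
          _ ≤ C * (1/ε) := mul_le_mul_of_nonneg_left (Ftr_le_inv hε hε1 (hr 0)) hC0
          _ ≤ C^1/ε + 2*C*ε := by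
              rw [pow_one, mul_one_div]
              nlinarith [mul_nonneg hC0 hε.le]
      · have hih := ih (by omega) (by omega)
        have hstep := hrec' (n+1) (by omega) hjk
        simp only [Nat.add_sub_cancel] at hstep
        have hF : Ftr ε (r n) ≤ ε + r n := Ftr_le_add hε (hr n)
        have hCn : 0 ≤ C^n := pow_nonneg hC0 n
        calc r (n+1) ≤ C * Ftr ε (r n) := hstep
          _ ≤ C * (ε + r n) := mul_le_mul_of_nonneg_left hF hC0
          _ ≤ C * (ε + (C^n/ε + 2*C*ε)) :=
              mul_le_mul_of_nonneg_left (by linarith) hC0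
          _ ≤ C^(n+1)/ε + 2*C*ε := by
              have e1 : C^(n+1)/ε = C * (C^n/ε) := by rw [pow_succ]; ring
              rw [e1]
              have ht0 : 0 ≤ C^n/ε := div_nonneg hCn hε.le
              nlinarith [mul_nonneg (mul_nonneg hC0 hε.le)
                (by linarith : (0:ℝ) ≤ 1/2 - C), mul_nonneg hC0 ht0]
  have hrk := key k hk1 le_rfl
  -- bound `C^k`
  have hε2 : ε ^ ((2:ℕ):ℝ) = ε * ε := by
    rw [Real.rpow_natCast]; ring
  have hCk : C^k ≤ (u/8) * (ε * ε) := by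
    have h1 : C^k = D^k * ε ^ (a/2 * k) := by
      rw [hC_eq, mul_pow, ← Real.rpow_natCast (ε ^ (a/2)) k, ← Real.rpow_mul hε.le]
    have h2 : D^k ≤ u/8 := by
      calc D^k ≤ (u/8)^k := pow_le_pow_left₀ hD0 hD k
        _ ≤ u/8 := pow_le_of_le_one (by positivity) (by linarith) (by omega)
    have h3 : ε ^ (a/2 * k) ≤ ε * ε := by
      rw [← hε2]
      apply Real.rpow_le_rpow_of_exponent_ge hε hε1
      push_cast; linarith
    have h4 : 0 ≤ ε ^ (a/2 * k) := by positivity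
    rw [h1]
    apply mul_le_mul h2 h3 h4 (by positivity)
  have hCkε : C^k / ε ≤ (u/8) * ε := by
    rw [div_le_iff₀ hε]
    nlinarith
  have h2Cε : 2*C*ε ≤ (u/4) * ε := by nlinarith
  have huε : 0 ≤ u * ε := by positivity
  linarith
end Paper
end

section
/- There exists λ₀ < ∞ such that for every λ ≥ λ₀ and all real numbers s₁, s₂, s₃, s₄ ≥ 0 the following holds. Set r := λ · (1 + λ/((1+s₁)(1+s₂)))^{−1} · (1 + λ/((1+s₃)(1+s₄)))^{−1}. If s₁ > √λ, s₂ > √λ and s₃ > √λ, then r > 3; and if in addition r ≤ √λ, then s₄ ≤ 3. -/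
set_option maxHeartbeats 2000000

namespace Paper

/-- the deterministic step behind the hard-core ratio recursion on the
binary tree: for `λ` large, if `s₁, s₂, s₃ > √λ` then
`r = λ (1 + λ/((1+s₁)(1+s₂)))⁻¹ (1 + λ/((1+s₃)(1+s₄)))⁻¹ > 3`, and if moreover `r ≤ √λ`
then `s₄ ≤ 3`. -/
theorem stmt17 :
    ∃ lam₀ : ℝ, ∀ lam : ℝ, lam₀ ≤ lam →
      ∀ s₁ s₂ s₃ s₄ : ℝ, 0 ≤ s₁ → 0 ≤ s₂ → 0 ≤ s₃ → 0 ≤ s₄ →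
        Real.sqrt lam < s₁ → Real.sqrt lam < s₂ → Real.sqrt lam < s₃ →
          (3 < lam * (1 + lam / ((1 + s₁) * (1 + s₂)))⁻¹ *
                (1 + lam / ((1 + s₃) * (1 + s₄)))⁻¹ ∧
            (lam * (1 + lam / ((1 + s₁) * (1 + s₂)))⁻¹ *
                (1 + lam / ((1 + s₃) * (1 + s₄)))⁻¹ ≤ Real.sqrt lam → s₄ ≤ 3)) := by
  refine ⟨484, fun lam hlam s₁ s₂ s₃ s₄ hs₁ hs₂ hs₃ hs₄ h1 h2 h3 => ?_⟩
  have hlam0 : (0:ℝ) ≤ lam := by linarith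
  set t := Real.sqrt lam with hdef
  have ht2 : t * t = lam := Real.mul_self_sqrt hlam0
  have ht22 : (22:ℝ) ≤ t := by
    have : Real.sqrt 484 ≤ t := Real.sqrt_le_sqrt hlam
    have h484 : Real.sqrt 484 = 22 := by
      rw [show (484:ℝ) = 22 ^ 2 by norm_num, Real.sqrt_sq (by norm_num)]
    linarith [this, h484.symm.le, h484.le]
  set pA := (1 + s₁) * (1 + s₂) with hpAdef
  set pB := (1 + s₃) * (1 + s₄) with hpBdef
  have hpA : 0 < pA := by positivity
  have hpB : 0 < pB := by positivity
  have hpAlam : lam < pA := by nlinarith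
  have hpBt : (1 + t) * (1 + s₄) ≤ pB := by nlinarith
  set a := lam / pA with hadef
  set b := lam / pB with hbdef
  have ha : a * pA = lam := div_mul_cancel₀ lam (ne_of_gt hpA)
  have hb : b * pB = lam := div_mul_cancel₀ lam (ne_of_gt hpB)
  have ha0 : 0 ≤ a := by positivity
  have hb0 : 0 ≤ b := by positivity
  have ha1 : a < 1 := (div_lt_one hpA).mpr hpAlam
  have hb1 : b < t := by
    rw [hbdef, div_lt_iff₀ hpB]
    nlinarith
  have hx : (0:ℝ) < 1 + a := by linarith
  have hy : (0:ℝ) < 1 + b := by linarith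
  have hrw : lam * (1 + a)⁻¹ * (1 + b)⁻¹ = lam / ((1 + a) * (1 + b)) := by
    rw [div_eq_mul_inv, mul_inv, ← mul_assoc]
  constructor
  · rw [hrw, lt_div_iff₀ (by positivity)]
    nlinarith [mul_pos hx hy]
  · intro h
    rw [hrw, div_le_iff₀ (by positivity)] at h
    -- lam ≤ t * ((1+a)*(1+b)) < 2t(1+b)
    have hkey : lam < 2 * t * (1 + b) := by nlinarith
    -- multiply by pB
    have e : lam * pB < 2 * t * pB + 2 * t * lam := by
      calc lam * pB < 2 * t * (1 + b) * pB := mul_lt_mul_of_pos_right hkey hpB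
        _ = 2 * t * pB + 2 * t * (b * pB) := by ring
        _ = 2 * t * pB + 2 * t * lam := by rw [hb]
    have hpos : 0 < lam - 2 * t := by nlinarith
    have hkey3 : (lam - 2 * t) * ((1 + t) * (1 + s₄)) < 2 * t * lam := by
      calc (lam - 2 * t) * ((1 + t) * (1 + s₄)) ≤ (lam - 2 * t) * pB :=
            mul_le_mul_of_nonneg_left hpBt hpos.le
        _ = lam * pB - 2 * t * pB := by ring
        _ < 2 * t * lam := by linarith
    rw [← ht2] at hkey3
    by_contra hc
    push_neg at hc
    have hQ : 0 < (t * t - 2 * t) * (1 + t) := by nlinarith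
    nlinarith [mul_lt_mul_of_pos_left (show (4:ℝ) < 1 + s₄ by linarith) hQ]

end Paper
end
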